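/- arXiv:2605.09757 — 5 statements merged into one kernel-verified Lean document; each statement's English description precedes it below -/
import Mathlib

section
/- Suppose the noise-bound functions η^M_t : 𝒳 → [0,∞) (t ≥ 1) satisfy ℙ( for all x ∈ 𝒳 and all t ≥ 1: |Σ_{i=1}^t M_i (h_t(x))_i| ≤ η^M_t(x) ) ≥ 1−δ. Then ℙ( for all x ∈ 𝒳 and all t ≥ 1: |f(x) − μ_t(x)| ≤ B·σ̃_t(x) + η^M_t(x) ) ≥ 1−δ. -/
open MeasureTheory ProbabilityTheory Matrix Real
open scoped BigOperators ENNReal NNReal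

noncomputable section

namespace KRR

/-- Euclidean 2-norm on `Fin t → ℝ`. -/
def twoNorm {t : ℕ} (v : Fin t → ℝ) : ℝ := Real.sqrt (∑ i, v i ^ 2)

/-- Maximum norm on `Fin t → ℝ` (the sup norm of the Pi type). -/
def supNorm {t : ℕ} (v : Fin t → ℝ) : ℝ := ‖v‖

/-- Weighted norm `‖s‖_C = √(sᵀ C s)`. -/
def wNorm {t : ℕ} (C : Matrix (Fin t) (Fin t) ℝ) (v : Fin t → ℝ) : ℝ :=
  Real.sqrt (v ⬝ᵥ C.mulVec v)

/-- Spectral norm (maximal singular value, ℓ²-operator norm) of a square real matrix. -/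
def specNorm {t : ℕ} (C : Matrix (Fin t) (Fin t) ℝ) : ℝ :=
  ‖LinearMap.toContinuousLinearMap (Matrix.toEuclideanLin C)‖

/-- Covering number of `X ⊆ ℝ^n` with grid constant `ζ`: the minimal cardinality of a
finite subset of `X` such that every point of `X` is within distance `ζ` of it. -/
def covN {n : ℕ} (X : Set (EuclideanSpace ℝ (Fin n))) (ζ : ℝ) : ℕ :=
  sInf {m | ∃ S : Finset (EuclideanSpace ℝ (Fin n)), ↑S ⊆ X ∧ S.card = m ∧
    ∀ x ∈ X, ∃ y ∈ S, ‖x - y‖ ≤ ζ}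

variable {E : Type*} {H : Type*} [NormedAddCommGroup H] [InnerProductSpace ℝ H]

/-- The kernel `k(x,x') = ⟪φ(x), φ(x')⟫`. -/
def ker (φ : E → H) (x y : E) : ℝ := inner ℝ (φ x) (φ y)

/-- Gram matrix `K_t`. -/
def gram (φ : E → H) (xs : ℕ → E) (t : ℕ) : Matrix (Fin t) (Fin t) ℝ :=
  Matrix.of fun i j => ker φ (xs i) (xs j)

/-- The vector `k_t(x)`. -/
def kvec (φ : E → H) (xs : ℕ → E) (t : ℕ) (x : E) : Fin t → ℝ :=
  fun i => ker φ (xs i) x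

/-- `h_t(x) = (K_t + ρ²I)⁻¹ k_t(x)`. -/
def hvec (φ : E → H) (xs : ℕ → E) (ρ : ℝ) (t : ℕ) (x : E) : Fin t → ℝ :=
  (gram φ xs t + ρ ^ 2 • (1 : Matrix (Fin t) (Fin t) ℝ))⁻¹ *ᵥ kvec φ xs t x

/-- Posterior variance `σ_t²(x) = k(x,x) − k_t(x)ᵀ(K_t+ρ²I)⁻¹k_t(x)`. -/
def postVar (φ : E → H) (xs : ℕ → E) (ρ : ℝ) (t : ℕ) (x : E) : ℝ :=
  ker φ x x - kvec φ xs t x ⬝ᵥ hvec φ xs ρ t x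

/-- `σ̃_t(x) = √(σ_t²(x) − ρ²‖h_t(x)‖₂²)`. -/
def sigTilde (φ : E → H) (xs : ℕ → E) (ρ : ℝ) (t : ℕ) (x : E) : ℝ :=
  Real.sqrt (postVar φ xs ρ t x - ρ ^ 2 * twoNorm (hvec φ xs ρ t x) ^ 2)

/-- The unknown function `f(x) = ⟪w, φ(x)⟫`. -/
def ffun (φ : E → H) (w : H) (x : E) : ℝ := inner ℝ w (φ x)

/-- The KRR estimate `μ_t(x) = Σᵢ Yᵢ (h_t(x))ᵢ` with `Yᵢ = f(xᵢ) + Mᵢ`. -/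
def muEst {Ω : Type*} (φ : E → H) (xs : ℕ → E) (ρ : ℝ) (w : H)
    (M : ℕ → Ω → ℝ) (t : ℕ) (x : E) (ω : Ω) : ℝ :=
  ∑ i : Fin t, (ffun φ w (xs i) + M i ω) * hvec φ xs ρ t x i

/-- `β_{1,t} = 2 ln(4 π_t Z(ζ_t,X)/δ)`. -/
def beta1 {n : ℕ} (X : Set (EuclideanSpace ℝ (Fin n))) (pis ζ : ℕ → ℝ) (δ : ℝ) (t : ℕ) : ℝ :=
  2 * Real.log (4 * pis t * (covN X (ζ t) : ℝ) / δ)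

/-- `β_{2,t} = 2 ln(4 π_t t/δ)`. -/
def beta2 (pis : ℕ → ℝ) (δ : ℝ) (t : ℕ) : ℝ :=
  2 * Real.log (4 * pis t * (t : ℝ) / δ)

/-- `a_{1,t} = √(L/(2ρ²)) ζ_t^{p/2}`. -/
def a1 (L ρ p : ℝ) (ζ : ℕ → ℝ) (t : ℕ) : ℝ :=
  Real.sqrt (L / (2 * ρ ^ 2)) * ζ t ^ (p / 2)

/-- `a_{2,t} = t L ζ_t^p`. -/
def a2 (L p : ℝ) (ζ : ℕ → ℝ) (t : ℕ) : ℝ :=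
  (t : ℝ) * L * ζ t ^ p

/-- `Δ_t(σ) = √(β_{1,t}) σ a_{1,t} + √(β_{2,t}) σ a_{2,t}`. -/
def Δt {n : ℕ} (X : Set (EuclideanSpace ℝ (Fin n))) (pis ζ : ℕ → ℝ) (δ L ρ p : ℝ)
    (t : ℕ) (σ : ℝ) : ℝ :=
  Real.sqrt (beta1 X pis ζ δ t) * σ * a1 L ρ p ζ t + Real.sqrt (beta2 pis δ t) * σ * a2 L p ζ t

lemma gram_quad (φ : E → H) (xs : ℕ → E) (t : ℕ) (v : Fin t → ℝ) :
    v ⬝ᵥ (gram φ xs t) *ᵥ v = ‖∑ i, v i • φ (xs i)‖ ^ 2 := by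
  rw [← real_inner_self_eq_norm_sq, sum_inner]
  simp only [inner_sum, real_inner_smul_left, real_inner_smul_right,
    dotProduct, Matrix.mulVec, gram, ker, Matrix.of_apply]
  refine Finset.sum_congr rfl fun i _ => ?_
  rw [Finset.mul_sum]
  refine Finset.sum_congr rfl fun j _ => ?_
  ring

lemma regGram_posDef (φ : E → H) (xs : ℕ → E) {ρ : ℝ} (hρ : 0 < ρ) (t : ℕ) :
    (gram φ xs t + ρ ^ 2 • (1 : Matrix (Fin t) (Fin t) ℝ)).PosDef := by
  refine Matrix.PosDef.of_dotProduct_mulVec_pos ?_ ?_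
  · have hsym : (gram φ xs t).IsHermitian := by
      ext i j
      simp [gram, ker, Matrix.conjTranspose_apply, real_inner_comm]
    have h1 : (ρ ^ 2 • (1 : Matrix (Fin t) (Fin t) ℝ)).IsHermitian := by
      ext i j
      simp [Matrix.conjTranspose_apply, Matrix.one_apply, eq_comm]
    exact hsym.add h1
  · intro v hv
    have h1 : v ⬝ᵥ (gram φ xs t + ρ ^ 2 • (1 : Matrix (Fin t) (Fin t) ℝ)) *ᵥ v
        = ‖∑ i, v i • φ (xs i)‖ ^ 2 + ρ ^ 2 * ∑ i, v i ^ 2 := by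
      rw [Matrix.add_mulVec, dotProduct_add, gram_quad, Matrix.smul_mulVec,
        Matrix.one_mulVec, dotProduct_smul]
      simp [dotProduct, smul_eq_mul, Finset.mul_sum, sq]
    have h2 : 0 < ∑ i, v i ^ 2 := by
      obtain ⟨i, hi⟩ := Function.ne_iff.mp hv
      refine Finset.sum_pos' (fun j _ => sq_nonneg _) ⟨i, Finset.mem_univ i, ?_⟩
      exact pow_pos (abs_pos.mpr hi) 2 |>.trans_le (le_of_eq (sq_abs _))
    have : (0 : ℝ) < ‖∑ i, v i • φ (xs i)‖ ^ 2 + ρ ^ 2 * ∑ i, v i ^ 2 := by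
      have := mul_pos (pow_pos hρ 2) h2
      nlinarith [sq_nonneg ‖∑ i, v i • φ (xs i)‖]
    simpa [h1] using this

/-- Lemma 1: if the noise-bound functions `η^M_t` satisfy the uniform
probabilistic noise bound, then the uniform error bound holds with
`η_t(x) = B σ̃_t(x) + η^M_t(x)`. -/
theorem stmt0
    {nx : ℕ} (hnx : 1 ≤ nx)
    (X : Set (EuclideanSpace ℝ (Fin nx))) (hXne : X.Nonempty) (hXcpt : IsCompact X)
    {H : Type*} [NormedAddCommGroup H] [InnerProductSpace ℝ H] [CompleteSpace H]
    (φ : EuclideanSpace ℝ (Fin nx) → H)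
    (xs : ℕ → EuclideanSpace ℝ (Fin nx)) (hxs : ∀ i, xs i ∈ X)
    (ρ : ℝ) (hρ : 0 < ρ)
    (B : ℝ) (hB : 0 ≤ B) (w : H) (hw : ‖w‖ ≤ B)
    {Ω : Type*} [MeasurableSpace Ω] (P : Measure Ω) [IsProbabilityMeasure P]
    (M : ℕ → Ω → ℝ) (hMmeas : ∀ i, Measurable (M i))
    (δ : ℝ) (hδ : δ ∈ Set.Ioo (0 : ℝ) 1)
    (ηM : ℕ → EuclideanSpace ℝ (Fin nx) → ℝ) (hηM : ∀ t, ∀ x ∈ X, 0 ≤ ηM t x)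
    (hnoise : ENNReal.ofReal (1 - δ) ≤
      P {ω | ∀ x ∈ X, ∀ t : ℕ, 1 ≤ t →
        |∑ i : Fin t, M i ω * hvec φ xs ρ t x i| ≤ ηM t x}) :
    ENNReal.ofReal (1 - δ) ≤
      P {ω | ∀ x ∈ X, ∀ t : ℕ, 1 ≤ t →
        |ffun φ w x - muEst φ xs ρ w M t x ω| ≤
          B * sigTilde φ xs ρ t x + ηM t x} := by
  refine le_trans hnoise (measure_mono ?_)
  intro ω hω x hx t ht
  set A : Matrix (Fin t) (Fin t) ℝ :=
    gram φ xs t + ρ ^ 2 • (1 : Matrix (Fin t) (Fin t) ℝ) with hAdef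
  have hA : A.PosDef := regGram_posDef φ xs hρ t
  have hdet : IsUnit A.det := isUnit_iff_ne_zero.mpr hA.det_pos.ne'
  set h := hvec φ xs ρ t x with hhdef
  have hAh : A *ᵥ h = kvec φ xs t x := by
    rw [hhdef, hvec, ← hAdef, Matrix.mulVec_mulVec, Matrix.mul_nonsing_inv _ hdet,
      Matrix.one_mulVec]
  set s : H := ∑ i, h i • φ (xs i) with hsdef
  set v : H := φ x - s with hvdef
  -- key quadratic identities
  have hKh : h ⬝ᵥ (gram φ xs t) *ᵥ h = h ⬝ᵥ kvec φ xs t x - ρ ^ 2 * ∑ i, h i ^ 2 := by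
    have := congrArg (fun u => h ⬝ᵥ u) hAh
    simp only [hAdef, Matrix.add_mulVec, dotProduct_add, Matrix.smul_mulVec,
      Matrix.one_mulVec, dotProduct_smul] at this
    have hd : h ⬝ᵥ h = ∑ i, h i ^ 2 := by simp [dotProduct, sq]
    rw [hd, smul_eq_mul] at this
    linarith [this]
  have hinner_xs : (inner ℝ (φ x) s : ℝ) = h ⬝ᵥ kvec φ xs t x := by
    rw [hsdef, inner_sum]
    simp [dotProduct, kvec, ker, real_inner_smul_right, real_inner_comm, mul_comm]
  have hnormv : ‖v‖ ^ 2 = postVar φ xs ρ t x - ρ ^ 2 * ∑ i, h i ^ 2 := by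
    rw [← real_inner_self_eq_norm_sq, hvdef, inner_sub_sub_self]
    have hss : (inner ℝ s s : ℝ) = h ⬝ᵥ (gram φ xs t) *ᵥ h := by
      rw [gram_quad φ xs t h, real_inner_self_eq_norm_sq]
    have hkh : kvec φ xs t x ⬝ᵥ h = h ⬝ᵥ kvec φ xs t x := dotProduct_comm _ _
    rw [hss, hKh,
      show (inner ℝ s (φ x) : ℝ) = h ⬝ᵥ kvec φ xs t x from
        (real_inner_comm (φ x) s).trans hinner_xs,
      hinner_xs, postVar, hkh]
    have : (inner ℝ (φ x) (φ x) : ℝ) = ker φ x x := rfl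
    rw [this]; ring
  have htwo : twoNorm h ^ 2 = ∑ i, h i ^ 2 := by
    rw [twoNorm, Real.sq_sqrt (Finset.sum_nonneg fun i _ => sq_nonneg _)]
  have hsig : sigTilde φ xs ρ t x = ‖v‖ := by
    rw [sigTilde, htwo, ← hnormv, Real.sqrt_sq (norm_nonneg _)]
  -- decomposition of the error
  have hdecomp : ffun φ w x - muEst φ xs ρ w M t x ω
      = inner ℝ w v - ∑ i : Fin t, M i ω * h i := by
    have h1 : (inner ℝ w v : ℝ)
        = ffun φ w x - ∑ i : Fin t, (inner ℝ w (φ (xs i)) : ℝ) * h i := by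
      rw [hvdef, inner_sub_right, hsdef, inner_sum, ffun]
      simp [real_inner_smul_right, mul_comm]
    rw [h1, muEst]
    simp only [ffun, add_mul, Finset.sum_add_distrib]
    ring
  rw [hdecomp]
  have h1 : |(inner ℝ w v : ℝ)| ≤ B * sigTilde φ xs ρ t x := by
    rw [hsig]
    calc |(inner ℝ w v : ℝ)| ≤ ‖w‖ * ‖v‖ := abs_real_inner_le_norm _ _
      _ ≤ B * ‖v‖ := mul_le_mul_of_nonneg_right hw (norm_nonneg _)
  have h2 : |∑ i : Fin t, M i ω * h i| ≤ ηM t x := hω x hx t ht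
  calc |inner ℝ w v - ∑ i : Fin t, M i ω * h i|
      ≤ |(inner ℝ w v : ℝ)| + |∑ i : Fin t, M i ω * h i| := abs_sub _ _
    _ ≤ B * sigTilde φ xs ρ t x + ηM t x := add_le_add h1 h2

end KRR
end
end

section
/- Assume the noise variables (M_i)_{i≥1} are independent and identically distributed with E[M_i] = 0, |M_i| ≤ m̄ almost surely, and Var(M_i) = σ̄². Then for every x ∈ 𝒳 and every t ≥ 1: ℙ( |f(x) − μ_t(x)| ≤ B·σ̃_t(x) + min{ √(2 ln(2/δ))·m̄·‖h_t(x)‖₂ , (2/3)·ln(2/δ)·m̄·‖h_t(x)‖_∞ + √(2 ln(2/δ))·σ̄·‖h_t(x)‖₂ } ) ≥ 1−δ. -/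
open MeasureTheory ProbabilityTheory Matrix Real
open scoped BigOperators ENNReal NNReal

noncomputable section

namespace KRR

variable {E : Type*} {H : Type*} [NormedAddCommGroup H] [InnerProductSpace ℝ H]

section Aux
set_option maxHeartbeats 1000000

variable {Ω : Type*} [MeasurableSpace Ω] {P : MeasureTheory.Measure Ω} [MeasureTheory.IsProbabilityMeasure P]

-- convexity bound for Hoeffding
lemma exp_le_cosh_aux {b y : ℝ} (hb : 0 ≤ b) (hy : |y| ≤ b) :
    Real.exp y ≤ Real.cosh b + (y / b) * Real.sinh b := by
  rcases eq_or_lt_of_le hb with h0 | hb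
  · have : y = 0 := by
      have := abs_nonneg y; have : |y| = 0 := le_antisymm (hy.trans h0.symm.le) (abs_nonneg y)
      exact abs_eq_zero.mp this
    simp [this, ← h0]
  · have h1 : ((b - y) / (2 * b)) • (-b) + ((b + y) / (2 * b)) • b = y := by
      simp only [smul_eq_mul]; field_simp; ring
    have h2 := convexOn_exp.2 (Set.mem_univ (-b)) (Set.mem_univ b)
      (by have h := (abs_le.mp hy).2
          apply div_nonneg (by linarith) (by linarith) : (0:ℝ) ≤ (b - y) / (2 * b))
      (by have h := (abs_le.mp hy).1
          apply div_nonneg (by linarith) (by linarith) : (0:ℝ) ≤ (b + y) / (2 * b))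
      (by field_simp; ring)
    rw [h1] at h2
    refine h2.trans (le_of_eq ?_)
    rw [Real.cosh_eq, Real.sinh_eq]
    have hb' : b ≠ 0 := hb.ne'
    simp only [smul_eq_mul]; field_simp
    ring


lemma le_zero_on_Ici (f f' : ℝ → ℝ) (hf0 : f 0 = 0)
    (hd : ∀ x, HasDerivAt f (f' x) x) (h' : ∀ x, 0 ≤ x → f' x ≤ 0) :
    ∀ x, 0 ≤ x → f x ≤ 0 := by
  intro x hx
  have hant : AntitoneOn f (Set.Ici 0) := by
    apply antitoneOn_of_deriv_nonpos (convex_Ici 0)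
    · exact fun y _ => (hd y).continuousAt.continuousWithinAt
    · exact fun y _ => (hd y).differentiableAt.differentiableWithinAt
    · intro y hy
      rw [interior_Ici] at hy
      rw [(hd y).deriv]
      exact h' y (le_of_lt hy)
  have := hant (Set.self_mem_Ici) hx hx
  simpa [hf0] using this

lemma exp_quad_neg {y : ℝ} (hy : y ≤ 0) : Real.exp y ≤ 1 + y + y ^ 2 / 2 := by
  have key : ∀ x, 0 ≤ x → Real.exp (-x) - (1 + (-x) + (-x) ^ 2 / 2) ≤ 0 := by
    apply le_zero_on_Ici _ (fun x => -Real.exp (-x) - (-1 + x))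
    · simp
    · intro x
      have h1 : HasDerivAt (fun x : ℝ => Real.exp (-x)) (-Real.exp (-x)) x := by
        simpa [Function.comp_def] using (Real.hasDerivAt_exp (-x)).comp x ((hasDerivAt_id x).neg)
      have h2 : HasDerivAt (fun x : ℝ => 1 + (-x) + (-x) ^ 2 / 2) (-1 + x) x := by
        have : HasDerivAt (fun x : ℝ => 1 + (-x) + x ^ 2 / 2) (-1 + x) x := by
          simpa [Pi.add_def] using (((hasDerivAt_id x).neg.const_add 1).add
            (((hasDerivAt_pow 2 x)).div_const 2))
        simpa [neg_sq] using this
      simpa [Pi.sub_def] using h1.sub h2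
    · intro x hx
      have := Real.add_one_le_exp (-x)
      linarith
  have := key (-y) (by linarith)
  simpa [neg_neg] using this

lemma key3 {y : ℝ} (hy : 0 ≤ y) : (Real.exp y - 1 - y) * (3 - y) ≤ 3 * y ^ 2 / 2 := by
  have h2 : ∀ x, 0 ≤ x → Real.exp x * (1 - x) - 1 ≤ 0 := by
    apply le_zero_on_Ici _ (fun x => -x * Real.exp x)
    · simp
    · intro x
      have := (Real.hasDerivAt_exp x).mul ((hasDerivAt_const x (1:ℝ)).sub (hasDerivAt_id' x))
      exact (this.sub_const 1).congr_deriv (by simp; ring)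
    · intro x hx
      have := Real.exp_pos x
      nlinarith
  have h1 : ∀ x, 0 ≤ x →
      (Real.exp x - 1) * (3 - x) - (Real.exp x - 1 - x) - 3 * x ≤ 0 := by
    apply le_zero_on_Ici _ (fun x => Real.exp x * (1 - x) - 1)
    · simp
    · intro x
      have ha := ((Real.hasDerivAt_exp x).sub_const 1).mul
        ((hasDerivAt_const x (3:ℝ)).sub (hasDerivAt_id' x))
      have hb := ((Real.hasDerivAt_exp x).sub_const 1).sub (hasDerivAt_id' x)
      have hc := (hasDerivAt_id' x).const_mul (3:ℝ)
      exact ((ha.sub hb).sub hc).congr_deriv (by simp; ring)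
    · intro x hx
      have := h2 x hx
      linarith
  have h0 : ∀ x, 0 ≤ x →
      (Real.exp x - 1 - x) * (3 - x) - 3 * x ^ 2 / 2 ≤ 0 := by
    apply le_zero_on_Ici _
      (fun x => (Real.exp x - 1) * (3 - x) - (Real.exp x - 1 - x) - 3 * x)
    · simp
    · intro x
      have ha := (((Real.hasDerivAt_exp x).sub_const 1).sub (hasDerivAt_id' x)).mul
        ((hasDerivAt_const x (3:ℝ)).sub (hasDerivAt_id' x))
      have hb := ((hasDerivAt_pow 2 x).const_mul (3:ℝ)).div_const 2
      exact (ha.sub hb).congr_deriv (by simp; ring)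
    · intro x hx
      have := h1 x hx
      linarith
  have := h0 y hy
  linarith

lemma exp_le_quad {b y : ℝ} (hb : 0 ≤ b) (hb3 : b < 3) (hy : y ≤ b) :
    Real.exp y ≤ 1 + y + y ^ 2 / (2 * (1 - b / 3)) := by
  have hpos : 0 < 1 - b / 3 := by linarith
  rcases le_or_gt y 0 with h0 | h0
  · have := exp_quad_neg h0
    have h1 : y ^ 2 / 2 ≤ y ^ 2 / (2 * (1 - b / 3)) := by
      apply div_le_div_of_nonneg_left (sq_nonneg y) (by linarith)
      nlinarith
    linarith
  · have hy3 : y < 3 := lt_of_le_of_lt hy hb3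
    have hk := key3 (le_of_lt h0)
    have h3y : 0 < 3 - y := by linarith
    have step : Real.exp y ≤ 1 + y + y ^ 2 / (2 * (1 - y / 3)) := by
      have hd : (0:ℝ) < 2 * (1 - y / 3) := by nlinarith
      have : Real.exp y - 1 - y ≤ y ^ 2 / (2 * (1 - y / 3)) := by
        rw [le_div_iff₀ hd]
        nlinarith [hk]
      linarith
    refine step.trans ?_
    have : y ^ 2 / (2 * (1 - y / 3)) ≤ y ^ 2 / (2 * (1 - b / 3)) := by
      apply div_le_div_of_nonneg_left (sq_nonneg y) (by linarith)
      nlinarith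
    linarith


lemma integrable_of_abs_le {Y : Ω → ℝ} (hm : AEStronglyMeasurable Y P) {c : ℝ}
    (h : ∀ᵐ ω ∂P, |Y ω| ≤ c) : Integrable Y P := by
  refine (integrable_const c).mono' hm ?_
  simpa [Real.norm_eq_abs] using h

lemma mgf_le_hoeffding {Y : Ω → ℝ} (hmeas : Measurable Y) {c : ℝ} (hc : 0 ≤ c)
    (hb : ∀ᵐ ω ∂P, |Y ω| ≤ c) (hmean : (∫ ω, Y ω ∂P) = 0) (l : ℝ) :
    mgf Y P l ≤ Real.exp (l ^ 2 * c ^ 2 / 2) := by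
  set b := |l| * c with hbdef
  have hb0 : 0 ≤ b := mul_nonneg (abs_nonneg l) hc
  have hYint : Integrable Y P := integrable_of_abs_le hmeas.aestronglyMeasurable hb
  have hpt : ∀ᵐ ω ∂P, Real.exp (l * Y ω) ≤
      Real.cosh b + (Real.sinh b / b * l) * Y ω := by
    filter_upwards [hb] with ω hω
    have habs : |l * Y ω| ≤ b := by
      rw [abs_mul]
      exact mul_le_mul_of_nonneg_left hω (abs_nonneg l)
    have := exp_le_cosh_aux hb0 habs
    calc Real.exp (l * Y ω) ≤ Real.cosh b + (l * Y ω / b) * Real.sinh b := this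
      _ = Real.cosh b + (Real.sinh b / b * l) * Y ω := by ring
  have hint2 : Integrable (fun ω => Real.cosh b + (Real.sinh b / b * l) * Y ω) P :=
    (integrable_const _).add (hYint.const_mul _)
  have hint1 : Integrable (fun ω => Real.exp (l * Y ω)) P := by
    refine (integrable_const (Real.exp b)).mono'
      ((hmeas.const_mul l).exp.aestronglyMeasurable) ?_
    filter_upwards [hb] with ω hω
    rw [Real.norm_eq_abs, abs_of_pos (Real.exp_pos _)]
    apply Real.exp_le_exp.mpr
    calc l * Y ω ≤ |l * Y ω| := le_abs_self _
      _ ≤ b := by rw [abs_mul]; exact mul_le_mul_of_nonneg_left hω (abs_nonneg l)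
  calc mgf Y P l = ∫ ω, Real.exp (l * Y ω) ∂P := rfl
    _ ≤ ∫ ω, (Real.cosh b + (Real.sinh b / b * l) * Y ω) ∂P :=
        integral_mono_ae hint1 hint2 hpt
    _ = Real.cosh b + (Real.sinh b / b * l) * ∫ ω, Y ω ∂P := by
        rw [integral_add (integrable_const _) (hYint.const_mul _),
          integral_const, integral_const_mul]
        simp
    _ = Real.cosh b := by rw [hmean]; ring
    _ ≤ Real.exp (b ^ 2 / 2) := Real.cosh_le_exp_half_sq b
    _ = Real.exp (l ^ 2 * c ^ 2 / 2) := by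
        rw [hbdef, mul_pow, sq_abs]

lemma mgf_le_bernstein {Y : Ω → ℝ} (hmeas : Measurable Y) {c' c v l : ℝ}
    (hc'0 : 0 ≤ c') (hc' : c' ≤ c)
    (hb : ∀ᵐ ω ∂P, |Y ω| ≤ c') (hmean : (∫ ω, Y ω ∂P) = 0)
    (hvar : (∫ ω, (Y ω) ^ 2 ∂P) = v) (hl : 0 ≤ l) (hlc : l * c < 3) :
    mgf Y P l ≤ Real.exp (l ^ 2 * v / (2 * (1 - l * c / 3))) := by
  set b := l * c with hbdef
  have hb0 : 0 ≤ b := mul_nonneg hl (hc'0.trans hc')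
  have hD : 0 < 1 - b / 3 := by simp only [sub_pos]; linarith
  have hYint : Integrable Y P := integrable_of_abs_le hmeas.aestronglyMeasurable hb
  have hY2int : Integrable (fun ω => (Y ω) ^ 2) P := by
    refine integrable_of_abs_le (hmeas.pow_const 2).aestronglyMeasurable (c := c' ^ 2) ?_
    filter_upwards [hb] with ω hω
    rw [abs_pow]
    exact pow_le_pow_left₀ (abs_nonneg _) hω 2
  have hv0 : 0 ≤ v := hvar ▸ integral_nonneg fun ω => sq_nonneg _
  set D := l ^ 2 / (2 * (1 - b / 3)) with hDdef
  have hpt : ∀ᵐ ω ∂P, Real.exp (l * Y ω) ≤ 1 + l * Y ω + D * (Y ω) ^ 2 := by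
    filter_upwards [hb] with ω hω
    have hyb : l * Y ω ≤ b := by
      calc l * Y ω ≤ l * c' := mul_le_mul_of_nonneg_left ((le_abs_self _).trans hω) hl
        _ ≤ l * c := mul_le_mul_of_nonneg_left hc' hl
    have := exp_le_quad hb0 hlc hyb
    calc Real.exp (l * Y ω) ≤ 1 + l * Y ω + (l * Y ω) ^ 2 / (2 * (1 - b / 3)) := this
      _ = 1 + l * Y ω + D * (Y ω) ^ 2 := by rw [hDdef]; ring
  have hint2 : Integrable (fun ω => 1 + l * Y ω + D * (Y ω) ^ 2) P :=
    ((integrable_const _).add (hYint.const_mul _)).add (hY2int.const_mul _)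
  have hint1 : Integrable (fun ω => Real.exp (l * Y ω)) P := by
    refine (integrable_const (Real.exp b)).mono'
      ((hmeas.const_mul l).exp.aestronglyMeasurable) ?_
    filter_upwards [hb] with ω hω
    rw [Real.norm_eq_abs, abs_of_pos (Real.exp_pos _)]
    apply Real.exp_le_exp.mpr
    calc l * Y ω ≤ l * c' := mul_le_mul_of_nonneg_left ((le_abs_self _).trans hω) hl
      _ ≤ b := mul_le_mul_of_nonneg_left hc' hl
  calc mgf Y P l = ∫ ω, Real.exp (l * Y ω) ∂P := rfl
    _ ≤ ∫ ω, (1 + l * Y ω + D * (Y ω) ^ 2) ∂P := integral_mono_ae hint1 hint2 hpt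
    _ = 1 + l * (∫ ω, Y ω ∂P) + D * (∫ ω, (Y ω) ^ 2 ∂P) := by
        have i1 : Integrable (fun ω => 1 + l * Y ω) P := by
          exact (integrable_const _).add (hYint.const_mul _)
        have i2 : Integrable (fun ω => D * (Y ω) ^ 2) P := by
          exact hY2int.const_mul _
        have i3 : Integrable (fun ω => l * Y ω) P := by
          exact hYint.const_mul _
        rw [integral_add i1 i2, integral_add (integrable_const (1:ℝ)) i3, integral_const,
          integral_const_mul, integral_const_mul]
        simp
    _ = 1 + D * v := by rw [hmean, hvar]; ring
    _ ≤ Real.exp (D * v) := by linarith [Real.add_one_le_exp (D * v)]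
    _ = Real.exp (l ^ 2 * v / (2 * (1 - l * c / 3))) := by rw [hDdef, ← hbdef]; ring_nf


lemma chernoff_tail (M : ℕ → Ω → ℝ) (hMmeas : ∀ i, Measurable (M i))
    (hindep : iIndepFun M P)
    {mbar : ℝ} (hbdd : ∀ i, ∀ᵐ ω ∂P, |M i ω| ≤ mbar)
    (g : ℕ → ℝ) (t : ℕ) {l ε : ℝ} (hl : 0 ≤ l) (q : ℕ → ℝ)
    (hq : ∀ i, mgf (fun ω => g i * M i ω) P l ≤ Real.exp (q i)) :
    P {ω | ε ≤ ∑ i ∈ Finset.range t, g i * M i ω} ≤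
      ENNReal.ofReal (Real.exp (-(l * ε) + ∑ i ∈ Finset.range t, q i)) := by
  set X : ℕ → Ω → ℝ := fun i ω => g i * M i ω with hX
  set S : Ω → ℝ := fun ω => ∑ i ∈ Finset.range t, g i * M i ω with hSdef
  have hXmeas : ∀ i, Measurable (X i) := fun i => (hMmeas i).const_mul (g i)
  have hXindep : iIndepFun X P :=
    hindep.comp (fun i => fun y => g i * y) (fun i => measurable_id.const_mul (g i))
  have hS : (∑ i ∈ Finset.range t, X i) = S := by
    funext ω; rw [Finset.sum_apply]
  have hSmeas : Measurable S :=
    Finset.measurable_sum _ fun i _ => hXmeas i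
  have hSint : Integrable (fun ω => Real.exp (l * S ω)) P := by
    have hae : ∀ᵐ ω ∂P, ∀ i ∈ Finset.range t, |M i ω| ≤ mbar :=
      (ae_ball_iff (Finset.range t).countable_toSet).mpr fun i _ => hbdd i
    refine (integrable_const (Real.exp (l * ∑ i ∈ Finset.range t, |g i| * mbar))).mono'
      ((hSmeas.const_mul l).exp.aestronglyMeasurable) ?_
    filter_upwards [hae] with ω hω
    rw [Real.norm_eq_abs, abs_of_pos (Real.exp_pos _)]
    apply Real.exp_le_exp.mpr
    apply mul_le_mul_of_nonneg_left _ hl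
    calc ∑ i ∈ Finset.range t, g i * M i ω
          ≤ ∑ i ∈ Finset.range t, |g i * M i ω| :=
            Finset.sum_le_sum fun i _ => le_abs_self _
        _ ≤ ∑ i ∈ Finset.range t, |g i| * mbar := by
            refine Finset.sum_le_sum fun i hi => ?_
            rw [abs_mul]
            exact mul_le_mul_of_nonneg_left (hω i hi) (abs_nonneg _)
  have hch := measure_ge_le_exp_mul_mgf (μ := P) (X := S) ε hl hSint
  have hmgf : mgf S P l ≤ Real.exp (∑ i ∈ Finset.range t, q i) := by
    rw [← hS, hXindep.mgf_sum hXmeas, Real.exp_sum]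
    exact Finset.prod_le_prod (fun i _ => mgf_nonneg) (fun i _ => hq i)
  have hfin : P {ω | ε ≤ S ω} ≠ ⊤ := measure_ne_top _ _
  rw [show {ω | ε ≤ ∑ i ∈ Finset.range t, g i * M i ω} = {ω | ε ≤ S ω} from rfl,
    ← ENNReal.ofReal_toReal hfin]
  apply ENNReal.ofReal_le_ofReal
  calc (P {ω | ε ≤ S ω}).toReal
      ≤ Real.exp (-l * ε) * mgf S P l := hch
    _ ≤ Real.exp (-l * ε) * Real.exp (∑ i ∈ Finset.range t, q i) :=
        mul_le_mul_of_nonneg_left hmgf (le_of_lt (Real.exp_pos _))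
    _ = Real.exp (-(l * ε) + ∑ i ∈ Finset.range t, q i) := by
        rw [← Real.exp_add]; ring_nf


lemma two_sided (M : ℕ → Ω → ℝ) (hMmeas : ∀ i, Measurable (M i))
    (hindep : iIndepFun M P)
    {mbar : ℝ} (hbdd : ∀ i, ∀ᵐ ω ∂P, |M i ω| ≤ mbar)
    (g : ℕ → ℝ) (t : ℕ) {l ε δ : ℝ} (hl : 0 ≤ l) (q : ℕ → ℝ)
    (hq : ∀ i, mgf (fun ω => g i * M i ω) P l ≤ Real.exp (q i))
    (hq' : ∀ i, mgf (fun ω => -g i * M i ω) P l ≤ Real.exp (q i))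
    (hδ0 : 0 ≤ δ)
    (hexp : Real.exp (-(l * ε) + ∑ i ∈ Finset.range t, q i) ≤ δ / 2) :
    P {ω | ε < |∑ i ∈ Finset.range t, g i * M i ω|} ≤ ENNReal.ofReal δ := by
  have h1 := chernoff_tail M hMmeas hindep hbdd g t (ε := ε) hl q hq
  have h2 := chernoff_tail M hMmeas hindep hbdd (fun i => -g i) t (ε := ε) hl q hq'
  have hsub : {ω | ε < |∑ i ∈ Finset.range t, g i * M i ω|} ⊆
      {ω | ε ≤ ∑ i ∈ Finset.range t, g i * M i ω} ∪
      {ω | ε ≤ ∑ i ∈ Finset.range t, -g i * M i ω} := by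
    intro ω hω
    simp only [Set.mem_setOf_eq] at hω
    rcases lt_abs.mp hω with hc | hc
    · exact Or.inl (Set.mem_setOf_eq ▸ le_of_lt hc)
    · refine Or.inr ?_
      simp only [Set.mem_setOf_eq]
      have : ∑ i ∈ Finset.range t, -g i * M i ω =
          -∑ i ∈ Finset.range t, g i * M i ω := by
        rw [← Finset.sum_neg_distrib]
        exact Finset.sum_congr rfl fun i _ => by ring
      rw [this]
      exact le_of_lt hc
  calc P {ω | ε < |∑ i ∈ Finset.range t, g i * M i ω|}
      ≤ P ({ω | ε ≤ ∑ i ∈ Finset.range t, g i * M i ω} ∪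
          {ω | ε ≤ ∑ i ∈ Finset.range t, -g i * M i ω}) := measure_mono hsub
    _ ≤ P {ω | ε ≤ ∑ i ∈ Finset.range t, g i * M i ω} +
        P {ω | ε ≤ ∑ i ∈ Finset.range t, -g i * M i ω} := measure_union_le _ _
    _ ≤ ENNReal.ofReal (Real.exp (-(l * ε) + ∑ i ∈ Finset.range t, q i)) +
        ENNReal.ofReal (Real.exp (-(l * ε) + ∑ i ∈ Finset.range t, q i)) :=
          add_le_add h1 h2
    _ ≤ ENNReal.ofReal (δ / 2) + ENNReal.ofReal (δ / 2) :=
        add_le_add (ENNReal.ofReal_le_ofReal hexp) (ENNReal.ofReal_le_ofReal hexp)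
    _ = ENNReal.ofReal δ := by
        rw [← ENNReal.ofReal_add (by linarith) (by linarith)]
        ring_nf

lemma trivial_case (M : ℕ → Ω → ℝ) (g : ℕ → ℝ) (t : ℕ) {ε δ : ℝ} (hε : 0 ≤ ε)
    (hz : ∀ i ∈ Finset.range t, ∀ᵐ ω ∂P, g i * M i ω = 0) :
    P {ω | ε < |∑ i ∈ Finset.range t, g i * M i ω|} ≤ ENNReal.ofReal δ := by
  have hae : ∀ᵐ ω ∂P, ∀ i ∈ Finset.range t, g i * M i ω = 0 :=
    (ae_ball_iff (Finset.range t).countable_toSet).mpr hz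
  have hN : ∀ᵐ ω ∂P, (∑ i ∈ Finset.range t, g i * M i ω) = 0 := by
    filter_upwards [hae] with ω hω
    exact Finset.sum_eq_zero hω
  have h0 : P {ω | ¬ (∑ i ∈ Finset.range t, g i * M i ω) = 0} = 0 := ae_iff.mp hN
  have hsub : {ω | ε < |∑ i ∈ Finset.range t, g i * M i ω|} ⊆
      {ω | ¬ (∑ i ∈ Finset.range t, g i * M i ω) = 0} := by
    intro ω hω h0'
    simp only [Set.mem_setOf_eq, h0', abs_zero] at hω
    exact absurd hω (not_lt.mpr hε)
  calc P _ ≤ P {ω | ¬ (∑ i ∈ Finset.range t, g i * M i ω) = 0} := measure_mono hsub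
    _ = 0 := h0
    _ ≤ ENNReal.ofReal δ := zero_le


lemma noise_bound (M : ℕ → Ω → ℝ) (hMmeas : ∀ i, Measurable (M i))
    (hindep : iIndepFun M P)
    {mbar σbar : ℝ} (hmbar : 0 ≤ mbar) (hσbar : 0 ≤ σbar)
    (hbdd : ∀ i, ∀ᵐ ω ∂P, |M i ω| ≤ mbar)
    (hmean : ∀ i, (∫ ω, M i ω ∂P) = 0)
    (hvar : ∀ i, (∫ ω, (M i ω) ^ 2 ∂P) = σbar ^ 2)
    {δ : ℝ} (hδ : δ ∈ Set.Ioo (0 : ℝ) 1)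
    (g : ℕ → ℝ) (t : ℕ) {sup : ℝ} (hgsup : ∀ i, |g i| ≤ sup) :
    P {ω | min (Real.sqrt (2 * Real.log (2 / δ)) * mbar *
          Real.sqrt (∑ i ∈ Finset.range t, g i ^ 2))
        ((2 / 3) * Real.log (2 / δ) * mbar * sup +
          Real.sqrt (2 * Real.log (2 / δ)) * σbar *
            Real.sqrt (∑ i ∈ Finset.range t, g i ^ 2)) <
        |∑ i ∈ Finset.range t, g i * M i ω|} ≤ ENNReal.ofReal δ := by
  obtain ⟨hδ0, hδ1⟩ := hδ
  set L := Real.log (2 / δ) with hLdef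
  have hL : 0 < L := Real.log_pos (by rw [lt_div_iff₀ hδ0]; linarith)
  set s2 := ∑ i ∈ Finset.range t, g i ^ 2 with hs2def
  have hs2nn : 0 ≤ s2 := Finset.sum_nonneg fun i _ => sq_nonneg _
  have hsup0 : 0 ≤ sup := (abs_nonneg (g 0)).trans (hgsup 0)
  set A := Real.sqrt (2 * L) * mbar * Real.sqrt s2 with hAdef
  set C := (2 / 3) * L * mbar * sup + Real.sqrt (2 * L) * σbar * Real.sqrt s2 with hCdef
  have hA0 : 0 ≤ A := by positivity
  have hC0 : 0 ≤ C := by positivity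
  have habs_g : ∀ (gv : ℝ) (i : ℕ), ∀ᵐ ω ∂P, |gv * M i ω| ≤ |gv| * mbar := by
    intro gv i
    filter_upwards [hbdd i] with ω hω
    rw [abs_mul]
    exact mul_le_mul_of_nonneg_left hω (abs_nonneg _)
  have hmean_g : ∀ (gv : ℝ) (i : ℕ), (∫ ω, gv * M i ω ∂P) = 0 := by
    intro gv i
    rw [integral_const_mul, hmean i, mul_zero]
  have hexpL : Real.exp (-L) = δ / 2 := by
    rw [Real.exp_neg, hLdef, Real.exp_log (by positivity)]
    rw [inv_div]
  rcases le_total A C with hAC | hAC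
  · rw [min_eq_left hAC]
    by_cases hv : mbar ^ 2 * s2 = 0
    · refine trivial_case M g t hA0 fun i hi => ?_
      rcases mul_eq_zero.mp hv with hm0 | hs0
      · have hm0' : mbar = 0 := by nlinarith [sq_nonneg mbar]
        filter_upwards [hbdd i] with ω hω
        have : M i ω = 0 := by
          have := abs_nonneg (M i ω); rw [hm0'] at hω
          have : |M i ω| = 0 := le_antisymm hω (abs_nonneg _)
          exact abs_eq_zero.mp this
        rw [this, mul_zero]
      · have hgi : g i = 0 := by
          have h1 : g i ^ 2 ≤ s2 := Finset.single_le_sum (fun j _ => sq_nonneg (g j)) hi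
          have := sq_nonneg (g i)
          nlinarith
        filter_upwards with ω
        rw [hgi, zero_mul]
    · set v := mbar ^ 2 * s2 with hvdef
      have hv0 : 0 < v := lt_of_le_of_ne (by positivity) (Ne.symm hv)
      set l := A / v with hldef
      have hl : 0 ≤ l := div_nonneg hA0 hv0.le
      have hoeff_i : ∀ (gv : ℝ) (i : ℕ), mgf (fun ω => gv * M i ω) P l ≤
          Real.exp (l ^ 2 * (mbar ^ 2 * gv ^ 2) / 2) := by
        intro gv i
        have := mgf_le_hoeffding ((hMmeas i).const_mul gv)
          (mul_nonneg (abs_nonneg gv) hmbar) (habs_g gv i) (hmean_g gv i) l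
        rw [show l ^ 2 * (mbar ^ 2 * gv ^ 2) / 2 = l ^ 2 * (|gv| * mbar) ^ 2 / 2 by
          rw [mul_pow, sq_abs]; ring]
        exact this
      refine two_sided M hMmeas hindep hbdd g t (ε := A) hl
        (fun i => l ^ 2 * (mbar ^ 2 * g i ^ 2) / 2)
        (fun i => hoeff_i (g i) i)
        (fun i => by simpa [neg_sq] using hoeff_i (-(g i)) i) hδ0.le ?_
      have hqsum : ∑ i ∈ Finset.range t, l ^ 2 * (mbar ^ 2 * g i ^ 2) / 2 =
          l ^ 2 * v / 2 := by
        rw [← Finset.sum_div, ← Finset.mul_sum, ← Finset.mul_sum, hvdef, hs2def]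
      have hA2 : A ^ 2 = 2 * L * v := by
        rw [hAdef, hvdef, mul_pow, mul_pow, Real.sq_sqrt (by positivity : (0:ℝ) ≤ 2 * L),
          Real.sq_sqrt hs2nn]
        ring
      have hkey : -(l * A) + l ^ 2 * v / 2 = -L := by
        rw [hldef]
        field_simp
        nlinarith [hA2]
      rw [hqsum, hkey, hexpL]
  · rw [min_eq_right hAC]
    by_cases hv : σbar ^ 2 * s2 = 0
    · refine trivial_case M g t hC0 fun i hi => ?_
      rcases mul_eq_zero.mp hv with hm0 | hs0
      · have hσ0 : σbar = 0 := by nlinarith [sq_nonneg σbar]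
        have hM0 : ∀ᵐ ω ∂P, M i ω = 0 := by
          have hmem : MemLp (M i) 2 P := MemLp.of_bound (hMmeas i).aestronglyMeasurable mbar
            (by simpa [Real.norm_eq_abs] using hbdd i)
          have hvd : variance (M i) P = (∫ ω, (M i ω) ^ 2 ∂P) - (∫ ω, M i ω ∂P) ^ 2 := by
            simpa using variance_eq_sub hmem
          have hvar0 : variance (M i) P = 0 := by
            rw [hvd, hvar i, hmean i, hσ0]; ring
          have hev : evariance (M i) P = 0 := by
            rw [← hmem.ofReal_variance_eq, hvar0, ENNReal.ofReal_zero]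
          have := (evariance_eq_zero_iff (hMmeas i).aemeasurable).mp hev
          filter_upwards [this] with ω hω
          rw [hω, hmean i]
        filter_upwards [hM0] with ω hω
        rw [hω, mul_zero]
      · have hgi : g i = 0 := by
          have h1 : g i ^ 2 ≤ s2 := Finset.single_le_sum (fun j _ => sq_nonneg (g j)) hi
          have := sq_nonneg (g i)
          nlinarith
        filter_upwards with ω
        rw [hgi, zero_mul]
    · set v := σbar ^ 2 * s2 with hvdef
      have hv0 : 0 < v := lt_of_le_of_ne (by positivity) (Ne.symm hv)
      have hσ0 : 0 < σbar := by
        rcases eq_or_lt_of_le hσbar with h | h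
        · exfalso; rw [hvdef, ← h] at hv0; simp at hv0
        · exact h
      have hs2pos : 0 < s2 := by
        rcases eq_or_lt_of_le hs2nn with h | h
        · exfalso; rw [hvdef, ← h] at hv0; simp at hv0
        · exact h
      -- σbar ≤ mbar
      have hσm : σbar ≤ mbar := by
        have h2 : (∫ ω, (M 0 ω) ^ 2 ∂P) ≤ mbar ^ 2 := by
          have hint : Integrable (fun ω => (M 0 ω) ^ 2) P := by
            refine integrable_of_abs_le ((hMmeas 0).pow_const 2).aestronglyMeasurable
              (c := mbar ^ 2) ?_
            filter_upwards [hbdd 0] with ω hω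
            rw [abs_pow]
            exact pow_le_pow_left₀ (abs_nonneg _) hω 2
          calc (∫ ω, (M 0 ω) ^ 2 ∂P) ≤ ∫ _, mbar ^ 2 ∂P := by
                refine integral_mono_ae hint (integrable_const _) ?_
                filter_upwards [hbdd 0] with ω hω
                calc (M 0 ω) ^ 2 = |M 0 ω| ^ 2 := (sq_abs _).symm
                  _ ≤ mbar ^ 2 := pow_le_pow_left₀ (abs_nonneg _) hω 2
            _ = mbar ^ 2 := by simp
        rw [hvar 0] at h2
        nlinarith
      have hsuppos : 0 < sup := by
        rcases eq_or_lt_of_le hsup0 with h | h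
        · exfalso
          have : ∀ i, g i = 0 := fun i => abs_eq_zero.mp
            (le_antisymm (by rw [← h] at hgsup; exact hgsup i) (abs_nonneg _))
          have : s2 = 0 := Finset.sum_eq_zero fun i _ => by rw [this i]; ring
          linarith
        · exact h
      set c := mbar * sup with hcdef
      have hc0 : 0 < c := mul_pos (lt_of_lt_of_le hσ0 hσm) hsuppos
      have hCpos : 0 < C := by
        have h1 : 0 < Real.sqrt (2 * L) * σbar * Real.sqrt s2 := by positivity
        have h2 : 0 ≤ (2 / 3) * L * mbar * sup := by positivity
        rw [hCdef]
        linarith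
      set D := v + c * C / 3 with hDdef
      have hD0 : 0 < D := by
        rw [hDdef]
        exact add_pos_of_pos_of_nonneg hv0
          (div_nonneg (mul_nonneg hc0.le hC0) (by norm_num))
      set l := C / D with hldef
      have hl : 0 ≤ l := div_nonneg hCpos.le hD0.le
      have hlc : l * c < 3 := by
        rw [hldef, div_mul_eq_mul_div, div_lt_iff₀ hD0, hDdef]
        nlinarith [mul_pos hc0 hCpos]
      have hone : 1 - l * c / 3 = v / D := by
        rw [hldef]
        field_simp
        ring
      have bern_i : ∀ (gv : ℝ) (i : ℕ), |gv| ≤ sup → mgf (fun ω => gv * M i ω) P l ≤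
          Real.exp (l ^ 2 * (σbar ^ 2 * gv ^ 2) / (2 * (1 - l * c / 3))) := by
        intro gv i hgv
        refine mgf_le_bernstein ((hMmeas i).const_mul gv)
          (mul_nonneg (abs_nonneg gv) hmbar)
          (by rw [hcdef]
              calc |gv| * mbar ≤ sup * mbar := mul_le_mul_of_nonneg_right hgv hmbar
                _ = mbar * sup := mul_comm _ _)
          (habs_g gv i) (hmean_g gv i) ?_ hl hlc
        rw [show (fun ω => (gv * M i ω) ^ 2) = fun ω => gv ^ 2 * (M i ω) ^ 2 from
          funext fun ω => by ring]
        rw [integral_const_mul, hvar i]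
        ring
      refine two_sided M hMmeas hindep hbdd g t (ε := C) hl
        (fun i => l ^ 2 * (σbar ^ 2 * g i ^ 2) / (2 * (1 - l * c / 3)))
        (fun i => bern_i (g i) i (hgsup i))
        (fun i => by simpa [neg_sq] using bern_i (-(g i)) i (by rw [abs_neg]; exact hgsup i))
        hδ0.le ?_
      have hqsum : ∑ i ∈ Finset.range t, l ^ 2 * (σbar ^ 2 * g i ^ 2) / (2 * (1 - l * c / 3)) =
          l ^ 2 * v / (2 * (1 - l * c / 3)) := by
        rw [← Finset.sum_div, ← Finset.mul_sum, ← Finset.mul_sum, hvdef, hs2def]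
      rw [hqsum, hone]
      -- C = a + s decomposition
      set a := (2 / 3) * L * c with hadef
      set s := Real.sqrt (2 * L * v) with hsdef
      have hs2L : s ^ 2 = 2 * L * v := Real.sq_sqrt (by positivity)
      have hsnn : 0 ≤ s := Real.sqrt_nonneg _
      have hann : 0 ≤ a := by positivity
      have hCas : C = a + s := by
        rw [hCdef, hadef, hcdef, hsdef, hvdef]
        congr 1
        · ring
        · rw [show 2 * L * (σbar ^ 2 * s2) = (Real.sqrt (2 * L) * σbar * Real.sqrt s2) ^ 2 by
            rw [mul_pow, mul_pow, Real.sq_sqrt (by positivity : (0:ℝ) ≤ 2 * L),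
              Real.sq_sqrt hs2nn]; ring]
          rw [Real.sqrt_sq (by positivity)]
      have hC2 : 2 * L * D ≤ C ^ 2 := by
        have h1 : C ^ 2 = a * a + 2 * (a * s) + s ^ 2 := by rw [hCas]; ring
        have h2 : 2 * L * D = s ^ 2 + a * C := by
          rw [hDdef, hadef, hs2L]; ring
        have h3 : a * C = a * a + a * s := by rw [hCas]; ring
        linarith [mul_nonneg hann hsnn]
      have hkey : -(l * C) + l ^ 2 * v / (2 * (v / D)) ≤ -L := by
        have heq : -(l * C) + l ^ 2 * v / (2 * (v / D)) = -(C ^ 2 / (2 * D)) := by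
          rw [hldef]
          field_simp
          ring
        rw [heq, neg_le_neg_iff, le_div_iff₀ (by linarith [hD0] : (0:ℝ) < 2 * D)]
        linarith [hC2]
      calc Real.exp (-(l * C) + l ^ 2 * v / (2 * (v / D))) ≤ Real.exp (-L) :=
            Real.exp_le_exp.mpr hkey
        _ = δ / 2 := hexpL
        _ ≤ δ / 2 := le_refl _


end Aux

lemma gram_dot (φ : E → H) (xs : ℕ → E) (t : ℕ) (v : Fin t → ℝ) :
    v ⬝ᵥ (gram φ xs t *ᵥ v) = ‖∑ i, v i • φ (xs i)‖ ^ 2 := by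
  rw [← real_inner_self_eq_norm_sq, sum_inner]
  simp only [inner_sum, real_inner_smul_left, real_inner_smul_right, dotProduct, mulVec,
    gram, Matrix.of_apply, ker, Finset.mul_sum]
  refine Finset.sum_congr rfl fun i _ => ?_
  refine Finset.sum_congr rfl fun j _ => ?_
  ring

lemma key_posdef (φ : E → H) (xs : ℕ → E) (t : ℕ) {ρ : ℝ} (hρ : 0 < ρ) :
    (gram φ xs t + ρ ^ 2 • (1 : Matrix (Fin t) (Fin t) ℝ)).PosDef := by
  refine Matrix.PosDef.of_dotProduct_mulVec_pos ?_ ?_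
  · have hg : (gram φ xs t).IsHermitian := by
      ext i j
      simp only [conjTranspose_apply, gram, Matrix.of_apply, ker, star_trivial]
      exact real_inner_comm _ _
    have hsm : (ρ ^ 2 • (1 : Matrix (Fin t) (Fin t) ℝ)).IsHermitian := by
      ext i j
      simp only [conjTranspose_apply, Matrix.smul_apply, Matrix.one_apply, star_trivial,
        smul_eq_mul]
      by_cases h : i = j <;> simp [h, eq_comm]
    exact hg.add hsm
  · intro v hv
    have h1 : star v = v := by simp
    rw [h1, Matrix.add_mulVec, dotProduct_add, Matrix.smul_mulVec, Matrix.one_mulVec,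
      dotProduct_smul, gram_dot]
    have h2 : 0 < v ⬝ᵥ v := by
      rcases Function.ne_iff.mp hv with ⟨i, hi⟩
      have hi' : v i ≠ 0 := hi
      have : 0 < v i ^ 2 := by positivity
      calc (0:ℝ) < v i ^ 2 := this
        _ ≤ ∑ j, v j ^ 2 := Finset.single_le_sum (fun j _ => sq_nonneg (v j))
            (Finset.mem_univ i)
        _ = v ⬝ᵥ v := by simp [dotProduct, sq]
    have h3 : (0:ℝ) ≤ ‖∑ i, v i • φ (xs i)‖ ^ 2 := sq_nonneg _
    have : (0:ℝ) < ρ ^ 2 * (v ⬝ᵥ v) := mul_pos (pow_pos hρ 2) h2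
    simp only [smul_eq_mul]
    linarith

lemma key_mulVec (φ : E → H) (xs : ℕ → E) {ρ : ℝ} (hρ : 0 < ρ) (t : ℕ) (x : E) :
    (gram φ xs t + ρ ^ 2 • (1 : Matrix (Fin t) (Fin t) ℝ)) *ᵥ hvec φ xs ρ t x =
      kvec φ xs t x := by
  set A := gram φ xs t + ρ ^ 2 • (1 : Matrix (Fin t) (Fin t) ℝ)
  have hdet : IsUnit A.det := (key_posdef φ xs t hρ).isUnit.map (detMonoidHom)
  rw [hvec, Matrix.mulVec_mulVec, Matrix.mul_nonsing_inv _ hdet, Matrix.one_mulVec]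


lemma norm_u_sq (φ : E → H) (xs : ℕ → E) {ρ : ℝ} (hρ : 0 < ρ) (t : ℕ) (x : E) :
    ‖φ x - ∑ i, hvec φ xs ρ t x i • φ (xs i)‖ ^ 2 =
      postVar φ xs ρ t x - ρ ^ 2 * twoNorm (hvec φ xs ρ t x) ^ 2 := by
  set h := hvec φ xs ρ t x with hh
  set k := kvec φ xs t x with hk
  have hKh : gram φ xs t *ᵥ h = k - ρ ^ 2 • h := by
    have := key_mulVec φ xs hρ t x
    rw [Matrix.add_mulVec, Matrix.smul_mulVec, Matrix.one_mulVec] at this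
    rw [hk]
    funext i
    have := congrFun this i
    simp only [Pi.add_apply, Pi.sub_apply, Pi.smul_apply, smul_eq_mul] at this ⊢
    linarith
  have e1 : (inner ℝ (φ x) (∑ i, h i • φ (xs i)) : ℝ) = k ⬝ᵥ h := by
    rw [inner_sum]
    simp only [real_inner_smul_right, dotProduct]
    refine Finset.sum_congr rfl fun i _ => ?_
    rw [hk, kvec, ker, real_inner_comm]
    ring
  have e2 : (inner ℝ (∑ i, h i • φ (xs i)) (∑ i, h i • φ (xs i)) : ℝ) =
      h ⬝ᵥ (gram φ xs t *ᵥ h) := by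
    rw [gram_dot, real_inner_self_eq_norm_sq]
  have e3 : h ⬝ᵥ (gram φ xs t *ᵥ h) = h ⬝ᵥ k - ρ ^ 2 * (h ⬝ᵥ h) := by
    rw [hKh, dotProduct_sub, dotProduct_smul, smul_eq_mul]
  have e4 : twoNorm h ^ 2 = h ⬝ᵥ h := by
    rw [twoNorm, Real.sq_sqrt (Finset.sum_nonneg fun i _ => sq_nonneg _)]
    simp [dotProduct, sq]
  rw [← real_inner_self_eq_norm_sq, real_inner_sub_sub_self, e1, e2, e3, e4,
    postVar, ← hh, ← hk, dotProduct_comm h k]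
  rw [ker]
  ring

lemma det_bound (φ : E → H) (xs : ℕ → E) {ρ : ℝ} (hρ : 0 < ρ) (t : ℕ) (x : E)
    {B : ℝ} (w : H) (hw : ‖w‖ ≤ B) :
    |ffun φ w x - ∑ i : Fin t, ffun φ w (xs i) * hvec φ xs ρ t x i| ≤
      B * sigTilde φ xs ρ t x := by
  set h := hvec φ xs ρ t x with hh
  set u := φ x - ∑ i, h i • φ (xs i) with hu
  have hlin : ffun φ w x - ∑ i : Fin t, ffun φ w (xs i) * h i = inner ℝ w u := by
    rw [hu, inner_sub_right, inner_sum]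
    simp only [real_inner_smul_right, ffun]
    congr 1
    refine Finset.sum_congr rfl fun i _ => ?_
    ring
  have hs : sigTilde φ xs ρ t x = ‖u‖ := by
    rw [sigTilde, ← hh, ← norm_u_sq φ xs hρ t x, ← hu, Real.sqrt_sq (norm_nonneg u)]
  rw [hlin, hs]
  calc |(inner ℝ w u : ℝ)| ≤ ‖w‖ * ‖u‖ := abs_real_inner_le_norm w u
    _ ≤ B * ‖u‖ := mul_le_mul_of_nonneg_right hw (norm_nonneg u)



/-- Theorem 3(b): nonuniform error bound under i.i.d. bounded noise. -/
theorem stmt9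
    {nx : ℕ} (hnx : 1 ≤ nx)
    (X : Set (EuclideanSpace ℝ (Fin nx))) (hXne : X.Nonempty) (hXcpt : IsCompact X)
    {H : Type*} [NormedAddCommGroup H] [InnerProductSpace ℝ H] [CompleteSpace H]
    (φ : EuclideanSpace ℝ (Fin nx) → H)
    (xs : ℕ → EuclideanSpace ℝ (Fin nx)) (hxs : ∀ i, xs i ∈ X)
    (ρ : ℝ) (hρ : 0 < ρ)
    (B : ℝ) (hB : 0 ≤ B) (w : H) (hw : ‖w‖ ≤ B)
    {Ω : Type*} [MeasurableSpace Ω] (P : Measure Ω) [IsProbabilityMeasure P]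
    (M : ℕ → Ω → ℝ) (hMmeas : ∀ i, Measurable (M i))
    (δ : ℝ) (hδ : δ ∈ Set.Ioo (0 : ℝ) 1)
    (mbar σbar : ℝ) (hmbar : 0 ≤ mbar) (hσbar : 0 ≤ σbar)
    (hindep : iIndepFun M P)
    (hident : ∀ i j, IdentDistrib (M i) (M j) P P)
    (hmean : ∀ i, (∫ ω, M i ω ∂P) = 0)
    (hbdd : ∀ i, ∀ᵐ ω ∂P, |M i ω| ≤ mbar)
    (hvar : ∀ i, variance (M i) P = σbar ^ 2) :
    ∀ x ∈ X, ∀ t : ℕ, 1 ≤ t →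
      ENNReal.ofReal (1 - δ) ≤
        P {ω | |ffun φ w x - muEst φ xs ρ w M t x ω| ≤
          B * sigTilde φ xs ρ t x +
            min (Real.sqrt (2 * Real.log (2 / δ)) * mbar * twoNorm (hvec φ xs ρ t x))
              ((2 / 3) * Real.log (2 / δ) * mbar * supNorm (hvec φ xs ρ t x) +
                Real.sqrt (2 * Real.log (2 / δ)) * σbar * twoNorm (hvec φ xs ρ t x))} := by
  intro x hx t ht
  classical
  set h : Fin t → ℝ := hvec φ xs ρ t x with hhdef
  set gg : ℕ → ℝ := fun i => if hi : i < t then h ⟨i, hi⟩ else 0 with hggdef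
  have hggi : ∀ (i : Fin t), gg (i : ℕ) = h i := by
    intro i
    simp only [hggdef, i.isLt, dif_pos, Fin.eta]
  have hs2eq : ∑ i ∈ Finset.range t, gg i ^ 2 = ∑ i : Fin t, h i ^ 2 := by
    rw [← Fin.sum_univ_eq_sum_range (fun i => gg i ^ 2) t]
    exact Finset.sum_congr rfl fun i _ => by rw [hggi i]
  have htn : Real.sqrt (∑ i ∈ Finset.range t, gg i ^ 2) = twoNorm h := by
    rw [twoNorm, hs2eq]
  have hgsup : ∀ i, |gg i| ≤ supNorm h := by
    intro i
    rw [hggdef]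
    by_cases hi : i < t
    · simp only [dif_pos hi]
      have := norm_le_pi_norm h ⟨i, hi⟩
      simpa [Real.norm_eq_abs, supNorm] using this
    · simp only [dif_neg hi, abs_zero, supNorm]
      exact norm_nonneg h
  have hvar' : ∀ i, (∫ ω, (M i ω) ^ 2 ∂P) = σbar ^ 2 := by
    intro i
    have hmem : MeasureTheory.MemLp (M i) 2 P :=
      MeasureTheory.MemLp.of_bound (hMmeas i).aestronglyMeasurable mbar
        (by simpa [Real.norm_eq_abs] using hbdd i)
    have hvd : variance (M i) P = (∫ ω, (M i ω) ^ 2 ∂P) - (∫ ω, M i ω ∂P) ^ 2 := by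
      simpa using variance_eq_sub hmem
    rw [hvar i, hmean i] at hvd
    linarith
  have key := noise_bound (P := P) M hMmeas hindep hmbar hσbar hbdd hmean hvar' hδ gg t hgsup
  rw [htn] at key
  have hdetb : |ffun φ w x - ∑ i : Fin t, ffun φ w (xs i) * h i| ≤
      B * sigTilde φ xs ρ t x := det_bound φ xs hρ t x w hw
  have hmu : ∀ ω, ffun φ w x - muEst φ xs ρ w M t x ω =
      (ffun φ w x - ∑ i : Fin t, ffun φ w (xs i) * h i) -
        ∑ i ∈ Finset.range t, gg i * M i ω := by
    intro ω
    simp only [muEst]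
    rw [← Fin.sum_univ_eq_sum_range (fun i => gg i * M i ω) t]
    rw [show ∑ i : Fin t, (ffun φ w (xs i) + M i ω) * h i =
        ∑ i : Fin t, (ffun φ w (xs i) * h i + gg (i : ℕ) * M (i : ℕ) ω) from
      Finset.sum_congr rfl fun i _ => by rw [hggi i]; ring]
    rw [Finset.sum_add_distrib]
    ring
  set mAC := min (Real.sqrt (2 * Real.log (2 / δ)) * mbar * twoNorm h)
      ((2 / 3) * Real.log (2 / δ) * mbar * supNorm h +
        Real.sqrt (2 * Real.log (2 / δ)) * σbar * twoNorm h) with hmACdef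
  have hmAC0 : 0 ≤ mAC := by
    have hL0 : 0 ≤ Real.log (2 / δ) := Real.log_nonneg (by
      rw [le_div_iff₀ hδ.1]
      linarith [hδ.2])
    have htn0 : 0 ≤ twoNorm h := Real.sqrt_nonneg _
    have hsn0 : 0 ≤ supNorm h := norm_nonneg h
    refine le_min ?_ ?_
    · exact mul_nonneg (mul_nonneg (Real.sqrt_nonneg _) hmbar) htn0
    · have h1 : 0 ≤ (2 / 3) * Real.log (2 / δ) * mbar * supNorm h := by positivity
      have h2 : 0 ≤ Real.sqrt (2 * Real.log (2 / δ)) * σbar * twoNorm h := by positivity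
      linarith
  set E := {ω | |ffun φ w x - muEst φ xs ρ w M t x ω| ≤
      B * sigTilde φ xs ρ t x + mAC} with hEdef
  have hEmeas : MeasurableSet E := by
    have hmeasmu : Measurable (muEst φ xs ρ w M t x) := by
      apply Finset.measurable_sum
      intro i _
      exact (measurable_const.add (hMmeas i)).mul_const _
    exact measurableSet_le ((measurable_const.sub hmeasmu).abs) measurable_const
  have hsub : Eᶜ ⊆ {ω | mAC < |∑ i ∈ Finset.range t, gg i * M i ω|} := by
    intro ω hω
    simp only [Set.mem_compl_iff, hEdef, Set.mem_setOf_eq, not_le] at hω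
    simp only [Set.mem_setOf_eq]
    by_contra hcon
    push_neg at hcon
    have hineq : |ffun φ w x - muEst φ xs ρ w M t x ω| ≤
        B * sigTilde φ xs ρ t x + mAC := by
      rw [hmu ω, sub_eq_add_neg]
      refine (abs_add_le _ _).trans ?_
      rw [abs_neg]
      exact add_le_add hdetb hcon
    linarith
  have hcompl : P Eᶜ ≤ ENNReal.ofReal δ := (measure_mono hsub).trans key
  have hEc : P E + P Eᶜ = 1 := by
    rw [measure_add_measure_compl hEmeas]
    exact measure_univ
  have h1 : ENNReal.ofReal (1 - δ) + ENNReal.ofReal δ = 1 := by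
    rw [← ENNReal.ofReal_add (by linarith [hδ.2]) hδ.1.le]
    norm_num
  have h2 : ENNReal.ofReal (1 - δ) + ENNReal.ofReal δ ≤ P E + ENNReal.ofReal δ := by
    rw [h1, ← hEc]
    exact add_le_add_right hcompl (P E)
  exact (ENNReal.add_le_add_iff_right ENNReal.ofReal_ne_top).mp h2

end KRR
end
end

section
/- Let C be a positive semidefinite t×t matrix with maximal singular value ς_C := ‖C‖₂ (spectral norm), and write ‖s‖_C := √(sᵀCs). Then for every t ≥ 1 and all x, x' ∈ 𝒳: (i) |ρ‖h_t(x)‖₂ − ρ‖h_t(x')‖₂| ≤ √(L/2)·‖x − x'‖^{p/2}; (ii) |ρ‖h_t(x)‖_∞ − ρ‖h_t(x')‖_∞| ≤ √(L/2)·‖x − x'‖^{p/2}; (iii) |ρ‖h_t(x)‖_C − ρ‖h_t(x')‖_C| ≤ √(ς_C·L/2)·‖x − x'‖^{p/2}. -/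
open MeasureTheory ProbabilityTheory Matrix Real
open scoped BigOperators ENNReal NNReal

noncomputable section

namespace KRR

variable {E : Type*} {H : Type*} [NormedAddCommGroup H] [InnerProductSpace ℝ H]

section AuxLemmas

/-! ### Auxiliary lemmas -/

lemma twoNorm_eq_norm {t : ℕ} (v : Fin t → ℝ) :
    twoNorm v = ‖(WithLp.equiv 2 (Fin t → ℝ)).symm v‖ := by
  rw [twoNorm, EuclideanSpace.norm_eq]
  congr 1
  refine Finset.sum_congr rfl fun i _ => ?_
  rw [Real.norm_eq_abs, sq_abs]
  rfl

lemma abs_twoNorm_sub_le {t : ℕ} (u v : Fin t → ℝ) :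
    |twoNorm u - twoNorm v| ≤ twoNorm (u - v) := by
  rw [twoNorm_eq_norm, twoNorm_eq_norm, twoNorm_eq_norm]
  have h : (WithLp.equiv 2 (Fin t → ℝ)).symm (u - v)
      = (WithLp.equiv 2 (Fin t → ℝ)).symm u - (WithLp.equiv 2 (Fin t → ℝ)).symm v := rfl
  rw [h]
  exact abs_norm_sub_norm_le _ _

lemma twoNorm_nonneg {t : ℕ} (v : Fin t → ℝ) : 0 ≤ twoNorm v := Real.sqrt_nonneg _

lemma sq_twoNorm {t : ℕ} (v : Fin t → ℝ) : twoNorm v ^ 2 = ∑ i, v i ^ 2 :=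
  Real.sq_sqrt (Finset.sum_nonneg fun _ _ => sq_nonneg _)

lemma norm_le_twoNorm {t : ℕ} (v : Fin t → ℝ) : ‖v‖ ≤ twoNorm v := by
  refine (pi_norm_le_iff_of_nonneg (twoNorm_nonneg v)).mpr fun i => ?_
  rw [Real.norm_eq_abs, ← Real.sqrt_sq_eq_abs]
  exact Real.sqrt_le_sqrt (Finset.single_le_sum (fun j _ => sq_nonneg (v j)) (Finset.mem_univ i))

lemma dot_gram {H : Type*} [NormedAddCommGroup H] [InnerProductSpace ℝ H] {E : Type*}
    (φ : E → H) (xs : ℕ → E) (t : ℕ) (d : Fin t → ℝ) :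
    d ⬝ᵥ (gram φ xs t) *ᵥ d = ‖∑ i, d i • φ (xs i)‖ ^ 2 := by
  rw [← real_inner_self_eq_norm_sq, sum_inner]
  simp only [inner_sum, real_inner_smul_left, real_inner_smul_right]
  simp only [dotProduct, Matrix.mulVec, dotProduct, gram, ker, Matrix.of_apply]
  rw [Finset.sum_comm]
  refine Finset.sum_congr rfl fun i _ => ?_
  rw [Finset.mul_sum]
  refine Finset.sum_congr rfl fun j _ => ?_
  rw [real_inner_comm]; ring

lemma dot_gram_nonneg {H : Type*} [NormedAddCommGroup H] [InnerProductSpace ℝ H] {E : Type*}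
    (φ : E → H) (xs : ℕ → E) (t : ℕ) (d : Fin t → ℝ) :
    0 ≤ d ⬝ᵥ (gram φ xs t) *ᵥ d := by
  rw [dot_gram]; positivity

lemma regMat_posDef {H : Type*} [NormedAddCommGroup H] [InnerProductSpace ℝ H] {E : Type*}
    (φ : E → H) (xs : ℕ → E) (t : ℕ) {ρ : ℝ} (hρ : 0 < ρ) :
    (gram φ xs t + ρ ^ 2 • (1 : Matrix (Fin t) (Fin t) ℝ)).PosDef := by
  refine Matrix.PosDef.of_dotProduct_mulVec_pos ?_ ?_
  · have h1 : (gram φ xs t).IsHermitian := by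
      ext i j
      simp [Matrix.conjTranspose_apply, gram, ker, real_inner_comm]
    have h2 : (ρ ^ 2 • (1 : Matrix (Fin t) (Fin t) ℝ)).IsHermitian := by
      ext i j
      simp [Matrix.conjTranspose_apply, Matrix.one_apply]
      by_cases h : j = i
      · simp [h]
      · simp [Matrix.one_apply, eq_comm, h]
    exact h1.add h2
  · intro d hd
    have hsd : star d = d := rfl
    rw [hsd, Matrix.add_mulVec, dotProduct_add, Matrix.smul_mulVec,
      Matrix.one_mulVec, dotProduct_smul]
    have hpos : 0 < d ⬝ᵥ d := by
      rcases Function.ne_iff.mp hd with ⟨i, hi⟩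
      refine Finset.sum_pos' (fun j _ => mul_self_nonneg _) ⟨i, Finset.mem_univ i, ?_⟩
      exact mul_self_pos.mpr hi
    have h2 : 0 < ρ ^ 2 * (d ⬝ᵥ d) := mul_pos (by positivity) hpos
    simp only [smul_eq_mul]
    linarith [dot_gram_nonneg φ xs t d]

/-- The central estimate: `ρ²‖h_t(x) − h_t(x')‖₂² ≤ ‖φ(x) − φ(x')‖²/4`. -/
lemma key_bound {H : Type*} [NormedAddCommGroup H] [InnerProductSpace ℝ H] {E : Type*}
    (φ : E → H) (xs : ℕ → E) {ρ : ℝ} (hρ : 0 < ρ) (t : ℕ) (x x' : E) :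
    ρ ^ 2 * twoNorm (hvec φ xs ρ t x - hvec φ xs ρ t x') ^ 2 ≤
      ‖φ x - φ x'‖ ^ 2 / 4 := by
  set A := gram φ xs t + ρ ^ 2 • (1 : Matrix (Fin t) (Fin t) ℝ) with hAdef
  have hA : A.PosDef := regMat_posDef φ xs t hρ
  set d := hvec φ xs ρ t x - hvec φ xs ρ t x' with hd
  set v := kvec φ xs t x - kvec φ xs t x' with hv
  have hAd : A *ᵥ d = v := by
    have hdv : d = A⁻¹ *ᵥ v := by
      rw [hd, hv, Matrix.mulVec_sub]; rfl
    rw [hdv, Matrix.mulVec_mulVec, Matrix.mul_nonsing_inv A hA.det_pos.ne'.isUnit,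
      Matrix.one_mulVec]
  have h2 : v ⬝ᵥ d = d ⬝ᵥ (gram φ xs t) *ᵥ d + ρ ^ 2 * ∑ i, d i ^ 2 := by
    rw [← hAd, dotProduct_comm, hAdef, Matrix.add_mulVec, dotProduct_add,
      Matrix.smul_mulVec, Matrix.one_mulVec, dotProduct_smul]
    simp only [smul_eq_mul, dotProduct]
    congr 1
    congr 1
    exact Finset.sum_congr rfl fun i _ => (sq (d i)).symm
  have h3 : v ⬝ᵥ d = inner ℝ (∑ i, d i • φ (xs i)) (φ x - φ x') := by
    rw [sum_inner]
    simp only [real_inner_smul_left]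
    simp only [dotProduct, hv, Pi.sub_apply, kvec, ker, inner_sub_right]
    exact Finset.sum_congr rfl fun i _ => by ring
  set a := ‖∑ i, d i • φ (xs i)‖ with ha
  have hag : d ⬝ᵥ (gram φ xs t) *ᵥ d = a ^ 2 := dot_gram φ xs t d
  have hub : (inner ℝ (∑ i, d i • φ (xs i)) (φ x - φ x') : ℝ) ≤ a * ‖φ x - φ x'‖ :=
    real_inner_le_norm _ _
  have hb : twoNorm d ^ 2 = ∑ i, d i ^ 2 := sq_twoNorm d
  nlinarith [sq_nonneg (a - ‖φ x - φ x'‖ / 2), norm_nonneg (φ x - φ x')]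

lemma psi_sq_le {H : Type*} [NormedAddCommGroup H] [InnerProductSpace ℝ H] {E : Type*}
    (φ : E → H) {x x' : E} {B : ℝ}
    (h1 : |ker φ x x - ker φ x x'| ≤ B)
    (h2 : |ker φ x' x' - ker φ x' x| ≤ B) :
    ‖φ x - φ x'‖ ^ 2 ≤ 2 * B := by
  have hx : ‖φ x - φ x'‖ ^ 2
      = (ker φ x x - ker φ x x') + (ker φ x' x' - ker φ x' x) := by
    rw [← real_inner_self_eq_norm_sq, inner_sub_left, inner_sub_right, inner_sub_right]
    simp only [ker]
    ring
  rw [hx]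
  linarith [(abs_le.mp h1).2, (abs_le.mp h2).2]

lemma sqrt_half_rpow {r : ℝ} (hr : 0 ≤ r) {L : ℝ} (hL : 0 ≤ L) (p : ℝ) :
    Real.sqrt (L / 2 * r ^ p) = Real.sqrt (L / 2) * r ^ (p / 2) := by
  rw [Real.sqrt_mul (by linarith)]
  congr 1
  rw [Real.sqrt_eq_rpow, ← Real.rpow_mul hr]
  congr 1
  ring

lemma dot_symm_mulVec {t : ℕ} {S : Matrix (Fin t) (Fin t) ℝ} (hS : S.IsHermitian)
    (v w : Fin t → ℝ) : v ⬝ᵥ (S *ᵥ w) = (S *ᵥ v) ⬝ᵥ w := by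
  rw [Matrix.dotProduct_mulVec, ← Matrix.mulVec_transpose]
  congr 1
  rw [← Matrix.conjTranspose_eq_transpose_of_trivial, hS]

open scoped MatrixOrder in
lemma wNorm_eq_twoNorm {t : ℕ} {C : Matrix (Fin t) (Fin t) ℝ} (hC : C.PosSemidef)
    (v : Fin t → ℝ) : wNorm C v = twoNorm (CFC.sqrt C *ᵥ v) := by
  rw [wNorm, twoNorm]
  congr 1
  calc v ⬝ᵥ C *ᵥ v = v ⬝ᵥ (CFC.sqrt C * CFC.sqrt C) *ᵥ v := by
        rw [CFC.sqrt_mul_sqrt_self C (Matrix.nonneg_iff_posSemidef.mpr hC)]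
    _ = (CFC.sqrt C *ᵥ v) ⬝ᵥ (CFC.sqrt C *ᵥ v) := by
        rw [← Matrix.mulVec_mulVec, dot_symm_mulVec (IsSelfAdjoint.of_nonneg (CFC.sqrt_nonneg C))]
    _ = ∑ i, (CFC.sqrt C *ᵥ v) i ^ 2 :=
        Finset.sum_congr rfl fun i _ => (sq _).symm

lemma abs_wNorm_sub_le {t : ℕ} {C : Matrix (Fin t) (Fin t) ℝ} (hC : C.PosSemidef)
    (u v : Fin t → ℝ) : |wNorm C u - wNorm C v| ≤ wNorm C (u - v) := by
  rw [wNorm_eq_twoNorm hC, wNorm_eq_twoNorm hC, wNorm_eq_twoNorm hC, Matrix.mulVec_sub]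
  exact abs_twoNorm_sub_le _ _

lemma specNorm_nonneg {t : ℕ} (C : Matrix (Fin t) (Fin t) ℝ) : 0 ≤ specNorm C :=
  norm_nonneg _

lemma wNorm_le_sqrt_specNorm {t : ℕ} {C : Matrix (Fin t) (Fin t) ℝ} (hC : C.PosSemidef)
    (v : Fin t → ℝ) : wNorm C v ≤ Real.sqrt (specNorm C) * twoNorm v := by
  have key : v ⬝ᵥ C *ᵥ v ≤ specNorm C * twoNorm v ^ 2 := by
    set ev : (Fin t → ℝ) → EuclideanSpace ℝ (Fin t) :=
      fun u => (WithLp.equiv 2 (Fin t → ℝ)).symm u with hev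
    have h1 : v ⬝ᵥ C *ᵥ v = inner ℝ (ev v) (ev (C *ᵥ v)) := by
      simp [PiLp.inner_apply, RCLike.inner_apply, dotProduct, hev, mul_comm]
    have h3 : ‖ev (C *ᵥ v)‖ ≤ specNorm C * ‖ev v‖ := by
      have heq : ev (C *ᵥ v)
          = LinearMap.toContinuousLinearMap (Matrix.toEuclideanLin C) (ev v) := by
        simp [hev, Matrix.toEuclideanLin_apply_piLp_toLp]
      rw [heq]
      exact (LinearMap.toContinuousLinearMap (Matrix.toEuclideanLin C)).le_opNorm _
    have h4 : ‖ev v‖ = twoNorm v := (twoNorm_eq_norm v).symm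
    calc v ⬝ᵥ C *ᵥ v = inner ℝ (ev v) (ev (C *ᵥ v)) := h1
      _ ≤ ‖ev v‖ * ‖ev (C *ᵥ v)‖ := real_inner_le_norm _ _
      _ ≤ ‖ev v‖ * (specNorm C * ‖ev v‖) := by
          exact mul_le_mul_of_nonneg_left h3 (norm_nonneg _)
      _ = specNorm C * twoNorm v ^ 2 := by rw [h4]; ring
  rw [wNorm]
  calc Real.sqrt (v ⬝ᵥ C.mulVec v) ≤ Real.sqrt (specNorm C * twoNorm v ^ 2) :=
        Real.sqrt_le_sqrt key
    _ = Real.sqrt (specNorm C) * twoNorm v := by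
        rw [Real.sqrt_mul (specNorm_nonneg C), Real.sqrt_sq (twoNorm_nonneg v)]

end AuxLemmas

/-- Lemma 2: Hölder continuity of `ρ‖h_t(·)‖₂`, `ρ‖h_t(·)‖_∞` and
`ρ‖h_t(·)‖_C` for positive semidefinite `C`. -/
theorem stmt12
    {nx : ℕ} (hnx : 1 ≤ nx)
    (X : Set (EuclideanSpace ℝ (Fin nx))) (hXne : X.Nonempty) (hXcpt : IsCompact X)
    {H : Type*} [NormedAddCommGroup H] [InnerProductSpace ℝ H] [CompleteSpace H]
    (φ : EuclideanSpace ℝ (Fin nx) → H)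
    (xs : ℕ → EuclideanSpace ℝ (Fin nx)) (hxs : ∀ i, xs i ∈ X)
    (ρ : ℝ) (hρ : 0 < ρ)
    (p : ℝ) (hp : p ∈ Set.Ioc (0 : ℝ) 1) (L : ℝ) (hL : 0 ≤ L)
    (hHolder : ∀ x ∈ X, ∀ x' ∈ X, ∀ x'' ∈ X,
      |ker φ x x' - ker φ x x''| ≤ L * ‖x' - x''‖ ^ p) :
    ∀ t : ℕ, 1 ≤ t → ∀ x ∈ X, ∀ x' ∈ X,
      (|ρ * twoNorm (hvec φ xs ρ t x) - ρ * twoNorm (hvec φ xs ρ t x')| ≤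
          Real.sqrt (L / 2) * ‖x - x'‖ ^ (p / 2)) ∧
      (|ρ * supNorm (hvec φ xs ρ t x) - ρ * supNorm (hvec φ xs ρ t x')| ≤
          Real.sqrt (L / 2) * ‖x - x'‖ ^ (p / 2)) ∧
      (∀ C : Matrix (Fin t) (Fin t) ℝ, C.PosSemidef →
        |ρ * wNorm C (hvec φ xs ρ t x) - ρ * wNorm C (hvec φ xs ρ t x')| ≤
          Real.sqrt (specNorm C * L / 2) * ‖x - x'‖ ^ (p / 2)) := by
  intro t ht x hx x' hx'
  set d := hvec φ xs ρ t x - hvec φ xs ρ t x' with hd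
  have hr : (0:ℝ) ≤ ‖x - x'‖ := norm_nonneg _
  -- the ψ bound
  have h1 := hHolder x hx x hx x' hx'
  have h2 : |ker φ x' x' - ker φ x' x| ≤ L * ‖x - x'‖ ^ p := by
    have := hHolder x' hx' x' hx' x hx
    rwa [norm_sub_rev] at this
  have hψ : ‖φ x - φ x'‖ ^ 2 ≤ 2 * (L * ‖x - x'‖ ^ p) := psi_sq_le φ h1 h2
  have hkey := key_bound φ xs hρ t x x'
  have hmain2 : (ρ * twoNorm d) ^ 2 ≤ L / 2 * ‖x - x'‖ ^ p := by
    have : (ρ * twoNorm d) ^ 2 = ρ ^ 2 * twoNorm d ^ 2 := by ring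
    rw [this, hd]
    nlinarith [hkey, hψ]
  have hBnn : (0:ℝ) ≤ L / 2 * ‖x - x'‖ ^ p := by
    have := Real.rpow_nonneg hr p
    positivity
  have hρd : 0 ≤ ρ * twoNorm d := mul_nonneg hρ.le (twoNorm_nonneg d)
  have hmain : ρ * twoNorm d ≤ Real.sqrt (L / 2) * ‖x - x'‖ ^ (p / 2) := by
    rw [← sqrt_half_rpow hr hL p]
    exact (Real.le_sqrt hρd hBnn).mpr hmain2
  have habs : ∀ a b : ℝ, |a - b| ≤ twoNorm d → |ρ * a - ρ * b| ≤
      Real.sqrt (L / 2) * ‖x - x'‖ ^ (p / 2) := by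
    intro a b hab
    rw [← mul_sub, abs_mul, abs_of_pos hρ]
    calc ρ * |a - b| ≤ ρ * twoNorm d := mul_le_mul_of_nonneg_left hab hρ.le
      _ ≤ _ := hmain
  refine ⟨?_, ?_, ?_⟩
  · exact habs _ _ (abs_twoNorm_sub_le _ _)
  · refine habs _ _ ?_
    calc |supNorm (hvec φ xs ρ t x) - supNorm (hvec φ xs ρ t x')|
        ≤ ‖hvec φ xs ρ t x - hvec φ xs ρ t x'‖ := abs_norm_sub_norm_le _ _
      _ ≤ twoNorm d := norm_le_twoNorm _
  · intro C hC
    have h5 : |wNorm C (hvec φ xs ρ t x) - wNorm C (hvec φ xs ρ t x')| ≤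
        Real.sqrt (specNorm C) * twoNorm d :=
      (abs_wNorm_sub_le hC _ _).trans (wNorm_le_sqrt_specNorm hC d)
    rw [← mul_sub, abs_mul, abs_of_pos hρ]
    calc ρ * |wNorm C (hvec φ xs ρ t x) - wNorm C (hvec φ xs ρ t x')|
        ≤ ρ * (Real.sqrt (specNorm C) * twoNorm d) := mul_le_mul_of_nonneg_left h5 hρ.le
      _ = Real.sqrt (specNorm C) * (ρ * twoNorm d) := by ring
      _ ≤ Real.sqrt (specNorm C) * (Real.sqrt (L / 2) * ‖x - x'‖ ^ (p / 2)) :=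
          mul_le_mul_of_nonneg_left hmain (Real.sqrt_nonneg _)
      _ = Real.sqrt (specNorm C * L / 2) * ‖x - x'‖ ^ (p / 2) := by
          rw [show specNorm C * L / 2 = specNorm C * (L / 2) by ring,
            Real.sqrt_mul (specNorm_nonneg C)]
          ring


end KRR
end
end

section
/- For all w, w' ∈ H: ρ·‖h(w) − h(w')‖₂ ≤ (1/2)·‖w − w'‖_H. -/
open Matrix Real
open scoped BigOperators

noncomputable section

namespace KRR

/-- Gram matrix `K = [⟪vᵢ, vⱼ⟫]` of a finite family in a Hilbert space. -/
def gramOf {H : Type*} [NormedAddCommGroup H] [InnerProductSpace ℝ H]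
    {t : ℕ} (v : Fin t → H) : Matrix (Fin t) (Fin t) ℝ :=
  Matrix.of fun i j => (inner ℝ (v i) (v j) : ℝ)

/-- `κ(w) = (⟪v₁,w⟫,…,⟪v_t,w⟫)`. -/
def kappa {H : Type*} [NormedAddCommGroup H] [InnerProductSpace ℝ H]
    {t : ℕ} (v : Fin t → H) (w : H) : Fin t → ℝ :=
  fun i => (inner ℝ (v i) w : ℝ)

/-- `h(w) = (K + ρ²I)⁻¹ κ(w)`. -/
def hOf {H : Type*} [NormedAddCommGroup H] [InnerProductSpace ℝ H]
    {t : ℕ} (v : Fin t → H) (ρ : ℝ) (w : H) : Fin t → ℝ :=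
  (gramOf v + ρ ^ 2 • (1 : Matrix (Fin t) (Fin t) ℝ))⁻¹ *ᵥ kappa v w

lemma quadForm {H : Type*} [NormedAddCommGroup H] [InnerProductSpace ℝ H]
    {t : ℕ} (v : Fin t → H) (ρ : ℝ) (y : Fin t → ℝ) :
    y ⬝ᵥ ((gramOf v + ρ ^ 2 • (1 : Matrix (Fin t) (Fin t) ℝ)) *ᵥ y)
      = ‖∑ i, y i • v i‖ ^ 2 + ρ ^ 2 * ∑ i, y i ^ 2 := by
  rw [Matrix.add_mulVec, dotProduct_add, Matrix.smul_mulVec, Matrix.one_mulVec]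
  congr 1
  · rw [← real_inner_self_eq_norm_sq, sum_inner]
    simp only [dotProduct, Matrix.mulVec, dotProduct, gramOf, Matrix.of_apply,
      real_inner_smul_left, inner_sum, real_inner_smul_right]
    refine Finset.sum_congr rfl fun i _ => ?_
    rw [Finset.mul_sum]
    exact Finset.sum_congr rfl fun j _ => by ring
  · rw [dotProduct_smul, smul_eq_mul]
    congr 1
    simp [dotProduct, sq]

/-- `ρ‖h(w) − h(w')‖₂ ≤ (1/2)‖w − w'‖`. -/
theorem stmt13
    {H : Type*} [NormedAddCommGroup H] [InnerProductSpace ℝ H] [CompleteSpace H]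
    {t : ℕ} (ht : 1 ≤ t) (v : Fin t → H) (ρ : ℝ) (hρ : 0 < ρ) :
    ∀ w w' : H,
      ρ * twoNorm (fun i => hOf v ρ w i - hOf v ρ w' i) ≤ (1 / 2) * ‖w - w'‖ := by
  intro w w'
  set u : H := w - w' with hu
  set A : Matrix (Fin t) (Fin t) ℝ := gramOf v + ρ ^ 2 • (1 : Matrix (Fin t) (Fin t) ℝ) with hA
  set x : Fin t → ℝ := A⁻¹ *ᵥ kappa v u with hx
  have hdiff : (fun i => hOf v ρ w i - hOf v ρ w' i) = x := by
    funext i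
    have hk : kappa v u = kappa v w - kappa v w' := by
      funext j; simp [kappa, hu, inner_sub_right]
    simp only [hOf, hx, hk, Matrix.mulVec_sub, Pi.sub_apply, hA]
  have hρ2 : (0:ℝ) < ρ ^ 2 := pow_pos hρ 2
  have hinj : Function.Injective A.mulVec := by
    intro y z hyz
    have hzero : A *ᵥ (y - z) = 0 := by
      rw [Matrix.mulVec_sub, hyz, sub_self]
    have hq := quadForm v ρ (y - z)
    rw [← hA, hzero, dotProduct_zero] at hq
    have h1 : (0:ℝ) ≤ ‖∑ i, (y - z) i • v i‖ ^ 2 := sq_nonneg _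
    have h2 : (0:ℝ) ≤ ∑ i, (y - z) i ^ 2 := Finset.sum_nonneg fun i _ => sq_nonneg _
    have hs : ∑ i, (y - z) i ^ 2 = 0 := by nlinarith
    have hz : y - z = 0 := by
      funext i
      have := (Finset.sum_eq_zero_iff_of_nonneg (fun i _ => sq_nonneg ((y - z) i))).mp hs i
        (Finset.mem_univ i)
      exact (pow_eq_zero_iff two_ne_zero).mp this
    exact sub_eq_zero.mp hz
  have hAunit : IsUnit A := Matrix.mulVec_injective_iff_isUnit.mp hinj
  have hAx : A *ᵥ x = kappa v u := by
    rw [hx, Matrix.mulVec_mulVec, Matrix.mul_nonsing_inv A ((Matrix.isUnit_iff_isUnit_det A).mp hAunit),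
      Matrix.one_mulVec]
  set s : H := ∑ i, x i • v i with hsdef
  have h1 : x ⬝ᵥ kappa v u = (inner ℝ s u : ℝ) := by
    rw [hsdef, sum_inner]
    simp [dotProduct, kappa, real_inner_smul_left]
  have h2 := quadForm v ρ x
  rw [← hA, hAx, h1, ← hsdef] at h2
  set S := ∑ i, x i ^ 2 with hSdef
  have hS0 : 0 ≤ S := Finset.sum_nonneg fun i _ => sq_nonneg _
  have hcs : (inner ℝ s u : ℝ) ≤ ‖s‖ * ‖u‖ := real_inner_le_norm s u
  have hkey : ρ ^ 2 * S ≤ (1 / 2 * ‖u‖) ^ 2 := by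
    nlinarith [sq_nonneg (‖s‖ - 1 / 2 * ‖u‖), norm_nonneg u, norm_nonneg s]
  rw [hdiff]
  have heq : ρ * twoNorm x = Real.sqrt (ρ ^ 2 * S) := by
    rw [twoNorm, ← hSdef, Real.sqrt_mul (sq_nonneg ρ), Real.sqrt_sq hρ.le]
  rw [heq]
  calc Real.sqrt (ρ ^ 2 * S) ≤ Real.sqrt ((1 / 2 * ‖u‖) ^ 2) := Real.sqrt_le_sqrt hkey
    _ = 1 / 2 * ‖u‖ := Real.sqrt_sq (by positivity)

end KRR
end
end

section
/- Let Φ be a real n×t matrix and ρ > 0, and set A := (I_n + ρ⁻²·ΦΦᵀ)⁻¹ (which exists since I_n + ρ⁻²ΦΦᵀ is positive definite). Then A − A² = ρ²·Φ·(ρ²I_t + ΦᵀΦ)⁻²·Φᵀ. -/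
open Matrix

noncomputable section

lemma smul_posSemidef {m : ℕ} {M : Matrix (Fin m) (Fin m) ℝ} (hM : M.PosSemidef)
    {c : ℝ} (hc : 0 ≤ c) : (c • M).PosSemidef := by
  refine ⟨?_, fun x => ?_⟩
  · unfold Matrix.IsHermitian
    rw [conjTranspose_smul, hM.1.eq]
    simp
  · have h := hM.2 x
    have e : (x.sum fun i xi => x.sum fun j xj => star xi * (c • M) i j * xj) =
        c * (x.sum fun i xi => x.sum fun j xj => star xi * M i j * xj) := by
      simp only [Finsupp.sum, Finset.mul_sum]
      refine Finset.sum_congr rfl fun i _ => Finset.sum_congr rfl fun j _ => ?_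
      simp only [Matrix.smul_apply, smul_eq_mul]
      ring
    rw [e]
    exact mul_nonneg hc h

/-- for `A = (Iₙ + ρ⁻²ΦΦᵀ)⁻¹` one has
`A − A² = ρ² Φ (ρ²I_t + ΦᵀΦ)⁻² Φᵀ`. -/
theorem stmt15
    {n t : ℕ} (Φ : Matrix (Fin n) (Fin t) ℝ) (ρ : ℝ) (hρ : 0 < ρ) :
    ((1 : Matrix (Fin n) (Fin n) ℝ) + (ρ ^ 2)⁻¹ • (Φ * Φᵀ))⁻¹ -
        ((1 : Matrix (Fin n) (Fin n) ℝ) + (ρ ^ 2)⁻¹ • (Φ * Φᵀ))⁻¹ ^ 2 =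
      ρ ^ 2 • (Φ * (ρ ^ 2 • (1 : Matrix (Fin t) (Fin t) ℝ) + Φᵀ * Φ)⁻¹ ^ 2 * Φᵀ) := by
  have hρ2 : (0:ℝ) < ρ ^ 2 := by positivity
  set c : ℝ := (ρ ^ 2)⁻¹ with hc
  have hc0 : 0 < c := by positivity
  set B : Matrix (Fin n) (Fin n) ℝ := 1 + c • (Φ * Φᵀ) with hBdef
  set D : Matrix (Fin t) (Fin t) ℝ := 1 + c • (Φᵀ * Φ) with hDdef
  set C : Matrix (Fin t) (Fin t) ℝ := ρ ^ 2 • 1 + Φᵀ * Φ with hCdef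
  have hPhiPhiT : (Φ * Φᵀ).PosSemidef := by
    have := posSemidef_self_mul_conjTranspose Φ
    simpa using this
  have hPhiTPhi : (Φᵀ * Φ).PosSemidef := by
    have := posSemidef_conjTranspose_mul_self Φ
    simpa using this
  have hBpd : B.PosDef := Matrix.PosDef.one.add_posSemidef (smul_posSemidef hPhiPhiT hc0.le)
  have hDpd : D.PosDef := Matrix.PosDef.one.add_posSemidef (smul_posSemidef hPhiTPhi hc0.le)
  have hB : IsUnit B.det := isUnit_iff_ne_zero.mpr hBpd.det_pos.ne'
  have hD : IsUnit D.det := isUnit_iff_ne_zero.mpr hDpd.det_pos.ne'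
  -- C = ρ² • D
  have hCD : C = ρ ^ 2 • D := by
    rw [hCdef, hDdef, smul_add, smul_smul, mul_inv_cancel₀ hρ2.ne', one_smul]
  -- push-through
  have hcomm : B * Φ = Φ * D := by
    rw [hBdef, hDdef]
    rw [Matrix.add_mul, Matrix.mul_add, Matrix.one_mul, Matrix.mul_one,
      Matrix.smul_mul, Matrix.mul_smul, Matrix.mul_assoc]
  have hpush : B⁻¹ * Φ = Φ * D⁻¹ := by
    have h : B⁻¹ * (B * Φ) * D⁻¹ = B⁻¹ * (Φ * D) * D⁻¹ := by rw [hcomm]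
    rw [← Matrix.mul_assoc B⁻¹ B Φ, Matrix.nonsing_inv_mul _ hB, Matrix.one_mul] at h
    rw [Matrix.mul_assoc B⁻¹ (Φ * D) D⁻¹, Matrix.mul_assoc Φ D D⁻¹,
      Matrix.mul_nonsing_inv _ hD, Matrix.mul_one] at h
    exact h.symm
  have hBsymm : Bᵀ = B := by
    rw [hBdef]; simp [transpose_add, transpose_smul, transpose_mul]
  have hDsymm : Dᵀ = D := by
    rw [hDdef]; simp [transpose_add, transpose_smul, transpose_mul]
  have hpush' : Φᵀ * B⁻¹ = D⁻¹ * Φᵀ := by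
    have := congrArg Matrix.transpose hpush
    rw [transpose_mul, transpose_mul, Matrix.transpose_nonsing_inv,
      Matrix.transpose_nonsing_inv, hBsymm, hDsymm] at this
    exact this
  -- LHS
  have hLHS : B⁻¹ - B⁻¹ ^ 2 = c • (Φ * D⁻¹ ^ 2 * Φᵀ) := by
    have h1 : B⁻¹ - B⁻¹ ^ 2 = B⁻¹ * (B - 1) * B⁻¹ := by
      rw [Matrix.mul_sub, Matrix.nonsing_inv_mul _ hB, Matrix.mul_one,
        Matrix.sub_mul, Matrix.one_mul, sq]
    rw [h1, hBdef, add_sub_cancel_left]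
    rw [Matrix.mul_smul, Matrix.smul_mul]
    congr 1
    calc B⁻¹ * (Φ * Φᵀ) * B⁻¹ = (B⁻¹ * Φ) * (Φᵀ * B⁻¹) := by
          simp only [Matrix.mul_assoc]
      _ = Φ * D⁻¹ * (D⁻¹ * Φᵀ) := by rw [hpush, hpush']
      _ = Φ * D⁻¹ ^ 2 * Φᵀ := by simp only [sq, Matrix.mul_assoc]
  -- RHS : C⁻¹ = c • D⁻¹
  have hu : IsUnit (ρ ^ 2) := isUnit_iff_ne_zero.mpr hρ2.ne'
  have hCinv : C⁻¹ = c • D⁻¹ := by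
    rw [hCD]
    refine Matrix.inv_eq_left_inv ?_
    rw [Matrix.smul_mul, Matrix.mul_smul, Matrix.nonsing_inv_mul _ hD, smul_smul, hc]
    rw [inv_mul_cancel₀ hρ2.ne', one_smul]
  have hRHS : ρ ^ 2 • (Φ * C⁻¹ ^ 2 * Φᵀ) = c • (Φ * D⁻¹ ^ 2 * Φᵀ) := by
    rw [hCinv, smul_pow, Matrix.mul_smul, Matrix.smul_mul, smul_smul]
    congr 1
    rw [hc]
    field_simp
  rw [hLHS, ← hRHS]
end
end
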